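/- arXiv:2507.18281 — 7 statements merged into one kernel-verified Lean document; each statement's English description precedes it below -/
import Mathlib

section
/- Let G be a bipartite graph with parts S (species) and C (characters). If G admits a directed perfect phylogeny (equivalently, for every two characters c1, c2, there do not exist three species s1, s2, s3 with s1 adjacent to c1 but not c2, s2 adjacent to c2 but not c1, and s3 adjacent to both), then G contains no induced path on five vertices starting and ending at species vertices (a Σ-graph), and conversely. -/
/-- the four-gamete condition holds for every pair of characters
iff the bipartite species-character graph contains no induced Σ-graph. -/
theorem four_gamete_iff_no_sigma {S C : Type} (M : C → S → Prop) :
    (∀ c1 c2 : C, c1 ≠ c2 →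
      ¬ ∃ s1 s2 s3 : S, (M c1 s1 ∧ ¬ M c2 s1) ∧ (M c2 s2 ∧ ¬ M c1 s2) ∧ (M c1 s3 ∧ M c2 s3)) ↔
    ¬ ∃ (c1 c2 : C) (s1 s2 s3 : S), c1 ≠ c2 ∧ s1 ≠ s2 ∧ s2 ≠ s3 ∧ s1 ≠ s3 ∧
      M c1 s1 ∧ M c1 s2 ∧ M c2 s2 ∧ M c2 s3 ∧ ¬ M c2 s1 ∧ ¬ M c1 s3 := by
  constructor
  · rintro h ⟨c1, c2, s1, s2, s3, hc, _, _, _, h1, h2, h3, h4, h5, h6⟩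
    exact h c1 c2 hc ⟨s1, s3, s2, ⟨h1, h5⟩, ⟨h4, h6⟩, h2, h3⟩
  · rintro h c1 c2 hc ⟨s1, s2, s3, ⟨h1, h2⟩, ⟨h3, h4⟩, h5, h6⟩
    refine h ⟨c1, c2, s1, s3, s2, hc, ?_, ?_, ?_, h1, h5, h6, h3, h2, h4⟩
    · rintro rfl; exact h2 h6
    · rintro rfl; exact h4 h5
    · rintro rfl; exact h4 h1
end

section
/- Let π = ⟨c1,...,cm⟩ be a reduction of a graph G_M, and let c be an active character in the partial reduction G_RB^k lying in the same connected component as c_{k+1}. If c_{k+1} has at least one neighbor in N^k(c), then N^k(c_{k+1}) contains either N^k(c) or its complement within the connected component (the set of species in the component of c not adjacent to c). -/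
open Classical

/-- A red-black graph: a bipartite graph on characters `C` and species `S`
with edges colored black or red. -/
structure RBGraph (S C : Type) where
  black : C → S → Prop
  red : C → S → Prop

namespace RBGraph

variable {S C : Type}

/-- `c` and `s` are adjacent (by an edge of either color). -/
def adj (G : RBGraph S C) (c : C) (s : S) : Prop := G.black c s ∨ G.red c s

/-- The underlying simple graph on `S ⊕ C`. -/
def toSimple (G : RBGraph S C) : SimpleGraph (S ⊕ C) where
  Adj x y := (∃ s c, x = Sum.inl s ∧ y = Sum.inr c ∧ G.adj c s) ∨
             (∃ s c, x = Sum.inr c ∧ y = Sum.inl s ∧ G.adj c s)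
  symm := by
    constructor
    rintro x y (⟨s, c, rfl, rfl, h⟩ | ⟨s, c, rfl, rfl, h⟩)
    · exact Or.inr ⟨s, c, rfl, rfl, h⟩
    · exact Or.inl ⟨s, c, rfl, rfl, h⟩
  loopless := by
    constructor
    rintro x (⟨s, c, rfl, h, -⟩ | ⟨s, c, rfl, h, -⟩) <;> simp at h

/-- `s` lies in the connected component of `c`. -/
def sameComp (G : RBGraph S C) (c : C) (s : S) : Prop :=
  G.toSimple.Reachable (Sum.inr c) (Sum.inl s)

/-- A character is active if it is incident to a red edge. -/
def active (G : RBGraph S C) (c : C) : Prop := ∃ s, G.red c s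

/-- A character is inactive if it is incident to no red edge. -/
def inactive (G : RBGraph S C) (c : C) : Prop := ¬ G.active c

/-- A character adjacent via red edges to all species of its connected component. -/
def redUniversal (G : RBGraph S C) (c : C) : Prop :=
  G.active c ∧ ∀ s, G.sameComp c s → G.red c s

/-- Remove all edges of red-universal characters (one round). -/
def pruneStep (G : RBGraph S C) : RBGraph S C :=
  ⟨fun c s => G.black c s ∧ ¬ G.redUniversal c,
   fun c s => G.red c s ∧ ¬ G.redUniversal c⟩

/-- Repeatedly remove all edges of red-universal characters. -/
def prune [Fintype C] (G : RBGraph S C) : RBGraph S C :=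
  pruneStep^[Fintype.card C] G

/-- Realization of a character `c`: add red edges from `c` to the species of its
connected component not adjacent to `c`, delete the black edges of `c`, then
repeatedly remove the edges of red-universal characters. -/
def realize [Fintype C] (G : RBGraph S C) (c : C) : RBGraph S C :=
  prune ⟨fun c' s => G.black c' s ∧ c' ≠ c,
         fun c' s => G.red c' s ∨ (c' = c ∧ ¬ G.black c s ∧ G.sameComp c s)⟩

/-- Realize a sequence of characters in order. -/
def realizeSeq [Fintype C] (G : RBGraph S C) (l : List C) : RBGraph S C :=
  l.foldl realize G

/-- The graph has no edges. -/
def edgeless (G : RBGraph S C) : Prop := ∀ c s, ¬ G.adj c s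

/-- A red Σ-graph: an induced all-red path `s1 - c1 - s2 - c2 - s3`. -/
def redSigma (G : RBGraph S C) : Prop :=
  ∃ (c1 c2 : C) (s1 s2 s3 : S), c1 ≠ c2 ∧ s1 ≠ s2 ∧ s2 ≠ s3 ∧ s1 ≠ s3 ∧
    G.red c1 s1 ∧ G.red c1 s2 ∧ G.red c2 s2 ∧ G.red c2 s3 ∧
    ¬ G.adj c1 s3 ∧ ¬ G.adj c2 s1

/-- A reduction of a red-black graph: an ordering of its (non-isolated) inactive
characters whose successive realizations yield an edgeless graph, never creating
a red Σ-graph. -/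
def isReductionFrom [Fintype C] (G : RBGraph S C) (l : List C) : Prop :=
  l.Nodup ∧ (∀ c, G.inactive c → (∃ s, G.black c s) → c ∈ l) ∧
  (∀ c ∈ l, G.inactive c) ∧
  edgeless (realizeSeq G l) ∧
  ∀ k ≤ l.length, ¬ redSigma (realizeSeq G (l.take k))

/-- A red-black graph is reducible if it admits a reduction. -/
def reducible [Fintype C] (G : RBGraph S C) : Prop := ∃ l, isReductionFrom G l

/-- A character is safe if its realization yields a reducible red-black graph. -/
def safe [Fintype C] (G : RBGraph S C) (c : C) : Prop := reducible (G.realize c)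

/-- The (all-black) red-black graph of a binary species-character matrix. -/
def ofMatrix (M : C → S → Prop) : RBGraph S C := ⟨M, fun _ _ => False⟩

/-- A reduction of the graph of a matrix: an ordering of all characters whose
successive realizations yield an edgeless graph, never creating a red Σ-graph. -/
def isReduction [Fintype C] (M : C → S → Prop) (l : List C) : Prop :=
  l.Nodup ∧ (∀ c, c ∈ l) ∧ edgeless (realizeSeq (ofMatrix M) l) ∧
  ∀ k ≤ l.length, ¬ redSigma (realizeSeq (ofMatrix M) (l.take k))

/-- The partial reduction after realizing the first `t` characters of `l`. -/
def partialRed [Fintype C] (M : C → S → Prop) (l : List C) (t : ℕ) : RBGraph S C :=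
  realizeSeq (ofMatrix M) (l.take t)

/-- The matrix is maximal: no character's species set is contained in that of
another character. -/
def MaximalM (M : C → S → Prop) : Prop :=
  ∀ c1 c2 : C, c1 ≠ c2 → ¬ (∀ s, M c1 s → M c2 s)

/-- A vertex is non-isolated if it has an incident edge. -/
def nonIsolated (G : RBGraph S C) : S ⊕ C → Prop
  | Sum.inl s => ∃ c, G.adj c s
  | Sum.inr c => ∃ s, G.adj c s

/-- The graph has a single connected component (ignoring isolated vertices). -/
def singleComponent (G : RBGraph S C) : Prop :=
  ∀ x y, G.nonIsolated x → G.nonIsolated y → G.toSimple.Reachable x y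

/-- Species incident only to black edges (and at least one of them). -/
def SB (G : RBGraph S C) : Set S := {s | (∃ c, G.black c s) ∧ ∀ c, ¬ G.red c s}

/-- Species incident to at least one red edge. -/
def SR (G : RBGraph S C) : Set S := {s | ∃ c, G.red c s}

/-- Inactive characters whose neighborhood is contained in `S_R`. -/
def CC (G : RBGraph S C) : Set C :=
  {c | G.inactive c ∧ (∃ s, G.black c s) ∧ ∀ s, G.black c s → s ∈ G.SR}

/-- Inactive characters with a neighbor and a non-neighbor in `S_R`. -/
def CI (G : RBGraph S C) : Set C :=
  {c | G.inactive c ∧ (∃ s ∈ G.SR, G.black c s) ∧ (∃ s ∈ G.SR, ¬ G.black c s)}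

/-- Inactive characters with a neighbor in `S_B` that are universal on `S_R`. -/
def CU (G : RBGraph S C) : Set C :=
  {c | G.inactive c ∧ (∃ s ∈ G.SB, G.black c s) ∧ ∀ s ∈ G.SR, G.black c s}

/-- The subgraph induced by a set of characters and a set of species. -/
def induced (G : RBGraph S C) (Cs : Set C) (Ss : Set S) : RBGraph S C :=
  ⟨fun c s => G.black c s ∧ c ∈ Cs ∧ s ∈ Ss,
   fun c s => G.red c s ∧ c ∈ Cs ∧ s ∈ Ss⟩

/-- `c2` is the center of an induced path on four species and three characters. -/
def isP7Center (M : C → S → Prop) (c2 : C) : Prop :=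
  ∃ (c1 c3 : C) (s1 s2 s3 s4 : S),
    c1 ≠ c2 ∧ c2 ≠ c3 ∧ c1 ≠ c3 ∧
    s1 ≠ s2 ∧ s1 ≠ s3 ∧ s1 ≠ s4 ∧ s2 ≠ s3 ∧ s2 ≠ s4 ∧ s3 ≠ s4 ∧
    M c1 s1 ∧ M c1 s2 ∧ M c2 s2 ∧ M c2 s3 ∧ M c3 s3 ∧ M c3 s4 ∧
    ¬ M c1 s3 ∧ ¬ M c1 s4 ∧ ¬ M c2 s1 ∧ ¬ M c2 s4 ∧ ¬ M c3 s1 ∧ ¬ M c3 s2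

/-- Minimum-degree species none of whose characters is the center of an induced `P7`. -/
def S7m (M : C → S → Prop) : Set S :=
  {s | (∀ s', {c | M c s}.ncard ≤ {c | M c s'}.ncard) ∧
       ∀ c, M c s → ¬ isP7Center M c}

/-- The species of `S_B` not adjacent to `cm`. -/
def SBm (G : RBGraph S C) (cm : C) : Set S := {s | s ∈ G.SB ∧ ¬ G.black cm s}

/-- `C_I` together with the characters of `C_U` with a neighbor in `S_B^m`. -/
def CBm (G : RBGraph S C) (cm : C) : Set C :=
  G.CI ∪ {c ∈ G.CU | ∃ s ∈ G.SBm cm, G.black c s}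

end RBGraph

namespace RBGraph

variable {S C : Type}

lemma red_of_pruneStep {G : RBGraph S C} {c s} (h : (pruneStep G).red c s) : G.red c s := h.1

lemma black_of_pruneStep {G : RBGraph S C} {c s} (h : (pruneStep G).black c s) : G.black c s := h.1

lemma red_of_iterate {G : RBGraph S C} {c s} (n : ℕ) (h : (pruneStep^[n] G).red c s) :
    G.red c s := by
  induction n generalizing G with
  | zero => exact h
  | succ n ih =>
    rw [Function.iterate_succ'] at h
    exact ih (red_of_pruneStep h)

lemma black_of_iterate {G : RBGraph S C} {c s} (n : ℕ) (h : (pruneStep^[n] G).black c s) :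
    G.black c s := by
  induction n generalizing G with
  | zero => exact h
  | succ n ih =>
    rw [Function.iterate_succ'] at h
    exact ih (black_of_pruneStep h)

lemma red_of_realize [Fintype C] {G : RBGraph S C} {d c s} (h : (realize G d).red c s) :
    G.red c s ∨ c = d := by
  have h' := red_of_iterate (Fintype.card C) h
  rcases h' with h' | h'
  · exact Or.inl h'
  · exact Or.inr h'.1

lemma black_of_realize [Fintype C] {G : RBGraph S C} {d c s} (h : (realize G d).black c s) :
    G.black c s ∧ c ≠ d :=
  black_of_iterate (Fintype.card C) h

lemma red_of_realizeSeq [Fintype C] {G : RBGraph S C} {l : List C} {c s}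
    (h : (realizeSeq G l).red c s) : G.red c s ∨ c ∈ l := by
  induction l generalizing G with
  | nil => exact Or.inl h
  | cons a t ih =>
    rcases ih h with h' | h'
    · rcases red_of_realize h' with h'' | h''
      · exact Or.inl h''
      · exact Or.inr (h'' ▸ (List.mem_cons_self : a ∈ a :: t))
    · exact Or.inr (List.mem_cons_of_mem a h')

/-- An active character has no black edges: invariant preserved by realization. -/
def Ok (G : RBGraph S C) : Prop := ∀ c, G.active c → ∀ s, ¬ G.black c s

lemma ok_realize [Fintype C] {G : RBGraph S C} (hG : Ok G) (d : C) : Ok (realize G d) := by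
  rintro c ⟨s, hr⟩ s' hb
  obtain ⟨hb', hne⟩ := black_of_realize hb
  rcases red_of_realize hr with h | h
  · exact hG c ⟨s, h⟩ s' hb'
  · exact hne h

lemma ok_realizeSeq [Fintype C] {G : RBGraph S C} (hG : Ok G) (l : List C) :
    Ok (realizeSeq G l) := by
  induction l generalizing G with
  | nil => exact hG
  | cons a t ih => exact ih (ok_realize hG a)

lemma ok_ofMatrix (M : C → S → Prop) : Ok (ofMatrix M) := by
  rintro c ⟨s, hr⟩
  exact absurd hr (by simp [ofMatrix])

lemma adj_toSimple {G : RBGraph S C} {c s} (h : G.adj c s) :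
    G.toSimple.Adj (Sum.inr c) (Sum.inl s) := Or.inr ⟨s, c, rfl, rfl, h⟩

end RBGraph

/-- Proposition: universalTopBottom. -/
theorem universal_top_bottom {S C : Type} [Fintype C] (M : C → S → Prop)
    (l : List C) (hl : RBGraph.isReduction M l) (k : ℕ) (hk : k < l.length)
    (Gk : RBGraph S C) (hGk : Gk = RBGraph.partialRed M l k)
    (c : C) (hc : Gk.active c)
    (hcomp : Gk.toSimple.Reachable (Sum.inr c) (Sum.inr (l.get ⟨k, hk⟩)))
    (hnb : ∃ s, Gk.red c s ∧ Gk.adj (l.get ⟨k, hk⟩) s) :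
    (∀ s, Gk.red c s → Gk.adj (l.get ⟨k, hk⟩) s) ∨
    (∀ s, Gk.sameComp c s → ¬ Gk.red c s → Gk.adj (l.get ⟨k, hk⟩) s) := by
  set ck := l.get ⟨k, hk⟩ with hck
  by_contra hcon
  push_neg at hcon
  obtain ⟨⟨s1, hred1, hnadj1⟩, ⟨s3, hcomp3, hnred3, hnadj3⟩⟩ := hcon
  obtain ⟨s2, hred2, hadj2⟩ := hnb
  -- ck is inactive in Gk
  have hckmem : ck ∈ l.drop k := by
    have h1 : l[k] :: l.drop (k + 1) = l.drop k := List.cons_getElem_drop_succ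
    rw [← h1]
    exact List.mem_cons_self
  have hdisj : List.Disjoint (l.take k) (l.drop k) :=
    List.disjoint_take_drop hl.1 le_rfl
  have hckred : ∀ s, ¬ Gk.red ck s := by
    intro s hr
    rw [hGk] at hr
    rcases RBGraph.red_of_realizeSeq hr with h | h
    · exact h
    · exact hdisj h hckmem
  -- c is active, so it has no black edges in Gk
  have hok : RBGraph.Ok Gk := by
    rw [hGk]
    exact RBGraph.ok_realizeSeq (RBGraph.ok_ofMatrix M) _
  have hcblack : ∀ s, ¬ Gk.black c s := hok c hc
  have hcne : c ≠ ck := by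
    rintro rfl
    exact hckred _ hred1
  -- adjacency facts of ck in Gk
  have hblack2 : Gk.black ck s2 := by
    rcases hadj2 with h | h
    · exact h
    · exact absurd h (hckred s2)
  have hnblack1 : ¬ Gk.black ck s1 := fun h => hnadj1 (Or.inl h)
  have hnblack3 : ¬ Gk.black ck s3 := fun h => hnadj3 (Or.inl h)
  -- distinctness
  have h12 : s1 ≠ s2 := fun h => hnadj1 (h ▸ hadj2)
  have h23 : s2 ≠ s3 := fun h => hnadj3 (h ▸ hadj2)
  have h13 : s1 ≠ s3 := fun h => hnred3 (h ▸ hred1)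
  -- components
  have hcomp1 : Gk.sameComp ck s1 :=
    hcomp.symm.trans (RBGraph.adj_toSimple (Or.inr hred1)).reachable
  have hcomp3' : Gk.sameComp ck s3 := hcomp.symm.trans hcomp3
  -- the intermediate graph after adding red edges of ck and deleting its black edges
  set G' : RBGraph S C :=
    ⟨fun c' s => Gk.black c' s ∧ c' ≠ ck,
     fun c' s => Gk.red c' s ∨ (c' = ck ∧ ¬ Gk.black ck s ∧ Gk.sameComp ck s)⟩ with hG'
  -- the Σ-graph invariant, preserved by pruning
  have key : ∀ n, (RBGraph.pruneStep^[n] G').red ck s1 ∧ (RBGraph.pruneStep^[n] G').red ck s3 ∧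
      (RBGraph.pruneStep^[n] G').red c s1 ∧ (RBGraph.pruneStep^[n] G').red c s2 ∧
      ¬ (RBGraph.pruneStep^[n] G').adj ck s2 ∧ ¬ (RBGraph.pruneStep^[n] G').adj c s3 := by
    intro n
    induction n with
    | zero =>
      refine ⟨Or.inr ⟨rfl, hnblack1, hcomp1⟩, Or.inr ⟨rfl, hnblack3, hcomp3'⟩,
        Or.inl hred1, Or.inl hred2, ?_, ?_⟩
      · rintro (⟨-, h⟩ | (h | ⟨-, h, -⟩))
        · exact h rfl
        · exact hckred s2 h
        · exact h hblack2
      · rintro (⟨h, -⟩ | (h | ⟨h, -⟩))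
        · exact hcblack s3 h
        · exact hnred3 h
        · exact hcne h
    | succ n ih =>
      obtain ⟨i1, i3, ic1, ic2, ina2, ina3⟩ := ih
      rw [Function.iterate_succ_apply']
      set H := RBGraph.pruneStep^[n] G'
      have hnuck : ¬ H.redUniversal ck := by
        rintro ⟨-, huniv⟩
        have : H.sameComp ck s2 :=
          ((RBGraph.adj_toSimple (Or.inr i1)).reachable.trans
            (RBGraph.adj_toSimple (Or.inr ic1)).reachable.symm).trans
            (RBGraph.adj_toSimple (Or.inr ic2)).reachable
        exact ina2 (Or.inr (huniv s2 this))
      have hnuc : ¬ H.redUniversal c := by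
        rintro ⟨-, huniv⟩
        have : H.sameComp c s3 :=
          ((RBGraph.adj_toSimple (Or.inr ic1)).reachable.trans
            (RBGraph.adj_toSimple (Or.inr i1)).reachable.symm).trans
            (RBGraph.adj_toSimple (Or.inr i3)).reachable
        exact ina3 (Or.inr (huniv s3 this))
      refine ⟨⟨i1, hnuck⟩, ⟨i3, hnuck⟩, ⟨ic1, hnuc⟩, ⟨ic2, hnuc⟩, ?_, ?_⟩
      · rintro (h | h)
        · exact ina2 (Or.inl h.1)
        · exact ina2 (Or.inr h.1)
      · rintro (h | h)
        · exact ina3 (Or.inl h.1)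
        · exact ina3 (Or.inr h.1)
  -- the realized graph is the pruned G'
  have hre : RBGraph.realize Gk ck = RBGraph.pruneStep^[Fintype.card C] G' := rfl
  obtain ⟨i1, i3, ic1, ic2, ina2, ina3⟩ := key (Fintype.card C)
  -- so realizing ck creates a red Σ-graph
  have hsig : RBGraph.redSigma (RBGraph.realizeSeq (RBGraph.ofMatrix M) (l.take (k + 1))) := by
    have htake : l.take (k + 1) = l.take k ++ [ck] := by
      rw [hck, List.get_eq_getElem, ← List.take_concat_get' l k hk]
    have hrs : RBGraph.realizeSeq (RBGraph.ofMatrix M) (l.take (k + 1)) =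
        RBGraph.realize Gk ck := by
      rw [htake, RBGraph.realizeSeq, List.foldl_append, hGk]
      rfl
    rw [hrs, hre]
    exact ⟨ck, c, s3, s1, s2, hcne.symm, h13.symm, h12, h23.symm,
      i3, i1, ic1, ic2, ina2, ina3⟩
  exact hl.2.2.2 (k + 1) hk hsig
end

section
/- Let P7 = s1–c1–s2–c2–s3–c3–s4 be an induced path in a bipartite species-character graph G_M on four species and three characters. Then in any reduction of G_M, the central character c2 cannot be the first of {c1, c2, c3} to be realized. -/
open Classical

namespace RBGraph

variable {S C : Type}

lemma adj_cs {G : RBGraph S C} {c : C} {s : S} (h : G.adj c s) :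
    G.toSimple.Adj (Sum.inr c) (Sum.inl s) := Or.inr ⟨s, c, rfl, rfl, h⟩

lemma adj_sc {G : RBGraph S C} {c : C} {s : S} (h : G.adj c s) :
    G.toSimple.Adj (Sum.inl s) (Sum.inr c) := Or.inl ⟨s, c, rfl, rfl, h⟩

/-- The pre-pruning stage of realization. -/
def preStage (G : RBGraph S C) (c : C) : RBGraph S C :=
  ⟨fun c' s => G.black c' s ∧ c' ≠ c,
   fun c' s => G.red c' s ∨ (c' = c ∧ ¬ G.black c s ∧ G.sameComp c s)⟩

lemma realize_eq [Fintype C] (G : RBGraph S C) (c : C) :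
    G.realize c = pruneStep^[Fintype.card C] (preStage G c) := rfl

/-- The core of a red Σ-graph. -/
def core (G : RBGraph S C) (a b : C) (x y z : S) : Prop :=
  a ≠ b ∧ x ≠ y ∧ y ≠ z ∧ x ≠ z ∧
  G.red a x ∧ G.red a y ∧ G.red b y ∧ G.red b z ∧ ¬ G.adj a z ∧ ¬ G.adj b x

lemma core.toRedSigma {G : RBGraph S C} {a b : C} {x y z : S}
    (h : core G a b x y z) : G.redSigma := ⟨a, b, x, y, z, h⟩

lemma core.pruneStep {G : RBGraph S C} {a b : C} {x y z : S}
    (h : core G a b x y z) : core (RBGraph.pruneStep G) a b x y z := by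
  obtain ⟨hab, hxy, hyz, hxz, rax, ray, rby, rbz, naz, nbx⟩ := h
  have hua : ¬ G.redUniversal a := by
    rintro ⟨-, hu⟩
    exact naz (Or.inr (hu z (((adj_cs (Or.inr ray)).reachable).trans
      (((adj_sc (Or.inr rby)).reachable).trans (adj_cs (Or.inr rbz)).reachable))))
  have hub : ¬ G.redUniversal b := by
    rintro ⟨-, hu⟩
    exact nbx (Or.inr (hu x (((adj_cs (Or.inr rby)).reachable).trans
      (((adj_sc (Or.inr ray)).reachable).trans (adj_cs (Or.inr rax)).reachable))))
  exact ⟨hab, hxy, hyz, hxz, ⟨rax, hua⟩, ⟨ray, hua⟩, ⟨rby, hub⟩, ⟨rbz, hub⟩,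
    fun hadj => naz (hadj.imp And.left And.left),
    fun hadj => nbx (hadj.imp And.left And.left)⟩

lemma core.iterate {G : RBGraph S C} {a b : C} {x y z : S}
    (h : core G a b x y z) (n : ℕ) : core (RBGraph.pruneStep^[n] G) a b x y z := by
  induction n generalizing G with
  | zero => exact h
  | succ n ih => rw [Function.iterate_succ_apply]; exact ih h.pruneStep

section Invariants

variable (c1 c2 c3 : C) (s1 s2 s3 s4 : S)

/-- Invariant before `c2` is realized. -/
structure Inv0 (G : RBGraph S C) : Prop where
  b11 : G.black c1 s1
  b12 : G.black c1 s2
  b22 : G.black c2 s2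
  b23 : G.black c2 s3
  b33 : G.black c3 s3
  b34 : G.black c3 s4
  r1 : ∀ s, ¬ G.red c1 s
  r2 : ∀ s, ¬ G.red c2 s
  r3 : ∀ s, ¬ G.red c3 s
  n13 : ¬ G.black c1 s3
  n14 : ¬ G.black c1 s4
  n21 : ¬ G.black c2 s1
  n24 : ¬ G.black c2 s4
  n31 : ¬ G.black c3 s1
  n32 : ¬ G.black c3 s2

/-- Invariant after `c2` but before `c1`, `c3` are realized. -/
structure Inv1 (G : RBGraph S C) : Prop where
  r21 : G.red c2 s1
  r24 : G.red c2 s4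
  a22 : ¬ G.adj c2 s2
  a23 : ¬ G.adj c2 s3
  b11 : G.black c1 s1
  b12 : G.black c1 s2
  b33 : G.black c3 s3
  b34 : G.black c3 s4
  r1 : ∀ s, ¬ G.red c1 s
  r3 : ∀ s, ¬ G.red c3 s
  n13 : ¬ G.black c1 s3
  n14 : ¬ G.black c1 s4
  n31 : ¬ G.black c3 s1
  n32 : ¬ G.black c3 s2

variable {c1 c2 c3 s1 s2 s3 s4}

lemma Inv0.pruneStep {G : RBGraph S C} (h : Inv0 c1 c2 c3 s1 s2 s3 s4 G) :
    Inv0 c1 c2 c3 s1 s2 s3 s4 (RBGraph.pruneStep G) := by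
  have h1 : ¬ G.redUniversal c1 := fun hu => hu.1.elim fun s hs => h.r1 s hs
  have h2 : ¬ G.redUniversal c2 := fun hu => hu.1.elim fun s hs => h.r2 s hs
  have h3 : ¬ G.redUniversal c3 := fun hu => hu.1.elim fun s hs => h.r3 s hs
  exact ⟨⟨h.b11, h1⟩, ⟨h.b12, h1⟩, ⟨h.b22, h2⟩, ⟨h.b23, h2⟩, ⟨h.b33, h3⟩, ⟨h.b34, h3⟩,
    fun s hs => h.r1 s hs.1, fun s hs => h.r2 s hs.1, fun s hs => h.r3 s hs.1,
    fun hb => h.n13 hb.1, fun hb => h.n14 hb.1, fun hb => h.n21 hb.1,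
    fun hb => h.n24 hb.1, fun hb => h.n31 hb.1, fun hb => h.n32 hb.1⟩

lemma Inv0.iterate {G : RBGraph S C} (h : Inv0 c1 c2 c3 s1 s2 s3 s4 G) (n : ℕ) :
    Inv0 c1 c2 c3 s1 s2 s3 s4 (RBGraph.pruneStep^[n] G) := by
  induction n generalizing G with
  | zero => exact h
  | succ n ih => rw [Function.iterate_succ_apply]; exact ih h.pruneStep

lemma Inv0.pre {G : RBGraph S C} (h : Inv0 c1 c2 c3 s1 s2 s3 s4 G) {c : C}
    (h1 : c1 ≠ c) (h2 : c2 ≠ c) (h3 : c3 ≠ c) :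
    Inv0 c1 c2 c3 s1 s2 s3 s4 (preStage G c) := by
  refine ⟨⟨h.b11, h1⟩, ⟨h.b12, h1⟩, ⟨h.b22, h2⟩, ⟨h.b23, h2⟩, ⟨h.b33, h3⟩, ⟨h.b34, h3⟩,
    ?_, ?_, ?_, fun hb => h.n13 hb.1, fun hb => h.n14 hb.1, fun hb => h.n21 hb.1,
    fun hb => h.n24 hb.1, fun hb => h.n31 hb.1, fun hb => h.n32 hb.1⟩
  · rintro s (hr | ⟨hc, -⟩); exacts [h.r1 s hr, h1 hc]
  · rintro s (hr | ⟨hc, -⟩); exacts [h.r2 s hr, h2 hc]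
  · rintro s (hr | ⟨hc, -⟩); exacts [h.r3 s hr, h3 hc]

lemma Inv0.realize [Fintype C] {G : RBGraph S C} (h : Inv0 c1 c2 c3 s1 s2 s3 s4 G)
    {c : C} (h1 : c1 ≠ c) (h2 : c2 ≠ c) (h3 : c3 ≠ c) :
    Inv0 c1 c2 c3 s1 s2 s3 s4 (G.realize c) := by
  rw [realize_eq]
  exact (h.pre h1 h2 h3).iterate _

lemma Inv1.pruneStep {G : RBGraph S C} (h : Inv1 c1 c2 c3 s1 s2 s3 s4 G) :
    Inv1 c1 c2 c3 s1 s2 s3 s4 (RBGraph.pruneStep G) := by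
  have h1 : ¬ G.redUniversal c1 := fun hu => hu.1.elim fun s hs => h.r1 s hs
  have h3 : ¬ G.redUniversal c3 := fun hu => hu.1.elim fun s hs => h.r3 s hs
  have h2 : ¬ G.redUniversal c2 := by
    rintro ⟨-, hu⟩
    exact h.a22 (Or.inr (hu s2 (((adj_cs (Or.inr h.r21)).reachable).trans
      (((adj_sc (Or.inl h.b11)).reachable).trans (adj_cs (Or.inl h.b12)).reachable))))
  exact ⟨⟨h.r21, h2⟩, ⟨h.r24, h2⟩,
    fun ha => h.a22 (ha.imp And.left And.left),
    fun ha => h.a23 (ha.imp And.left And.left),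
    ⟨h.b11, h1⟩, ⟨h.b12, h1⟩, ⟨h.b33, h3⟩, ⟨h.b34, h3⟩,
    fun s hs => h.r1 s hs.1, fun s hs => h.r3 s hs.1,
    fun hb => h.n13 hb.1, fun hb => h.n14 hb.1,
    fun hb => h.n31 hb.1, fun hb => h.n32 hb.1⟩

lemma Inv1.iterate {G : RBGraph S C} (h : Inv1 c1 c2 c3 s1 s2 s3 s4 G) (n : ℕ) :
    Inv1 c1 c2 c3 s1 s2 s3 s4 (RBGraph.pruneStep^[n] G) := by
  induction n generalizing G with
  | zero => exact h
  | succ n ih => rw [Function.iterate_succ_apply]; exact ih h.pruneStep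

lemma Inv1.pre {G : RBGraph S C} (h : Inv1 c1 c2 c3 s1 s2 s3 s4 G) {c : C}
    (h1 : c1 ≠ c) (h2 : c2 ≠ c) (h3 : c3 ≠ c) :
    Inv1 c1 c2 c3 s1 s2 s3 s4 (preStage G c) := by
  refine ⟨Or.inl h.r21, Or.inl h.r24, ?_, ?_,
    ⟨h.b11, h1⟩, ⟨h.b12, h1⟩, ⟨h.b33, h3⟩, ⟨h.b34, h3⟩, ?_, ?_,
    fun hb => h.n13 hb.1, fun hb => h.n14 hb.1,
    fun hb => h.n31 hb.1, fun hb => h.n32 hb.1⟩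
  · rintro (⟨hb, -⟩ | (hr | ⟨hc, -⟩))
    exacts [h.a22 (Or.inl hb), h.a22 (Or.inr hr), h2 hc]
  · rintro (⟨hb, -⟩ | (hr | ⟨hc, -⟩))
    exacts [h.a23 (Or.inl hb), h.a23 (Or.inr hr), h2 hc]
  · rintro s (hr | ⟨hc, -⟩); exacts [h.r1 s hr, h1 hc]
  · rintro s (hr | ⟨hc, -⟩); exacts [h.r3 s hr, h3 hc]

lemma Inv1.realize [Fintype C] {G : RBGraph S C} (h : Inv1 c1 c2 c3 s1 s2 s3 s4 G)
    {c : C} (h1 : c1 ≠ c) (h2 : c2 ≠ c) (h3 : c3 ≠ c) :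
    Inv1 c1 c2 c3 s1 s2 s3 s4 (G.realize c) := by
  rw [realize_eq]
  exact (h.pre h1 h2 h3).iterate _

/-- Realizing `c2` from a graph satisfying `Inv0` yields `Inv1`. -/
lemma Inv0.step2 [Fintype C] {G : RBGraph S C} (h : Inv0 c1 c2 c3 s1 s2 s3 s4 G)
    (hc12 : c1 ≠ c2) (hc23 : c2 ≠ c3) :
    Inv1 c1 c2 c3 s1 s2 s3 s4 (G.realize c2) := by
  rw [realize_eq]
  have hpre : Inv1 c1 c2 c3 s1 s2 s3 s4 (preStage G c2) := by
    refine ⟨Or.inr ⟨rfl, h.n21, ?_⟩, Or.inr ⟨rfl, h.n24, ?_⟩, ?_, ?_,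
      ⟨h.b11, hc12⟩, ⟨h.b12, hc12⟩, ⟨h.b33, Ne.symm hc23⟩, ⟨h.b34, Ne.symm hc23⟩,
      ?_, ?_, fun hb => h.n13 hb.1, fun hb => h.n14 hb.1,
      fun hb => h.n31 hb.1, fun hb => h.n32 hb.1⟩
    · exact ((adj_cs (Or.inl h.b22)).reachable).trans
        (((adj_sc (Or.inl h.b12)).reachable).trans (adj_cs (Or.inl h.b11)).reachable)
    · exact ((adj_cs (Or.inl h.b23)).reachable).trans
        (((adj_sc (Or.inl h.b33)).reachable).trans (adj_cs (Or.inl h.b34)).reachable)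
    · rintro (⟨-, hne⟩ | (hr | ⟨-, hb, -⟩))
      exacts [hne rfl, h.r2 _ hr, hb h.b22]
    · rintro (⟨-, hne⟩ | (hr | ⟨-, hb, -⟩))
      exacts [hne rfl, h.r2 _ hr, hb h.b23]
    · rintro s (hr | ⟨hc, -⟩); exacts [h.r1 s hr, hc12 hc]
    · rintro s (hr | ⟨hc, -⟩); exacts [h.r3 s hr, hc23 hc.symm]
  exact hpre.iterate _

/-- Realizing `c1` from a graph satisfying `Inv1` creates a red Σ-graph. -/
lemma Inv1.step1 [Fintype C] {G : RBGraph S C} (h : Inv1 c1 c2 c3 s1 s2 s3 s4 G)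
    (hc12 : c1 ≠ c2) (hs13 : s1 ≠ s3) (hs14 : s1 ≠ s4) (hs34 : s3 ≠ s4) :
    (G.realize c1).redSigma := by
  have hcore : core (preStage G c1) c1 c2 s3 s4 s1 := by
    have reach4 : G.sameComp c1 s4 :=
      ((adj_cs (Or.inl h.b11)).reachable).trans
        (((adj_sc (Or.inr h.r21)).reachable).trans (adj_cs (Or.inr h.r24)).reachable)
    have reach3 : G.sameComp c1 s3 :=
      reach4.trans (((adj_sc (Or.inl h.b34)).reachable).trans
        (adj_cs (Or.inl h.b33)).reachable)
    refine ⟨hc12, hs34, hs14.symm, hs13.symm,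
      Or.inr ⟨rfl, h.n13, reach3⟩, Or.inr ⟨rfl, h.n14, reach4⟩,
      Or.inl h.r24, Or.inl h.r21, ?_, ?_⟩
    · rintro (⟨-, hne⟩ | (hr | ⟨-, hb, -⟩))
      exacts [hne rfl, h.r1 _ hr, hb h.b11]
    · rintro (⟨hb, -⟩ | (hr | ⟨hc, -⟩))
      exacts [h.a23 (Or.inl hb), h.a23 (Or.inr hr), hc12 hc.symm]
  rw [realize_eq]
  exact (hcore.iterate _).toRedSigma

/-- Realizing `c3` from a graph satisfying `Inv1` creates a red Σ-graph. -/
lemma Inv1.step3 [Fintype C] {G : RBGraph S C} (h : Inv1 c1 c2 c3 s1 s2 s3 s4 G)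
    (hc23 : c2 ≠ c3) (hs12 : s1 ≠ s2) (hs14 : s1 ≠ s4) (hs24 : s2 ≠ s4) :
    (G.realize c3).redSigma := by
  have hcore : core (preStage G c3) c3 c2 s2 s1 s4 := by
    have reach1 : G.sameComp c3 s1 :=
      ((adj_cs (Or.inl h.b34)).reachable).trans
        (((adj_sc (Or.inr h.r24)).reachable).trans (adj_cs (Or.inr h.r21)).reachable)
    have reach2 : G.sameComp c3 s2 :=
      reach1.trans (((adj_sc (Or.inl h.b11)).reachable).trans
        (adj_cs (Or.inl h.b12)).reachable)
    refine ⟨Ne.symm hc23, hs12.symm, hs14, hs24,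
      Or.inr ⟨rfl, h.n32, reach2⟩, Or.inr ⟨rfl, h.n31, reach1⟩,
      Or.inl h.r21, Or.inl h.r24, ?_, ?_⟩
    · rintro (⟨-, hne⟩ | (hr | ⟨-, hb, -⟩))
      exacts [hne rfl, h.r3 _ hr, hb h.b34]
    · rintro (⟨hb, -⟩ | (hr | ⟨hc, -⟩))
      exacts [h.a22 (Or.inl hb), h.a22 (Or.inr hr), hc23 hc]
  rw [realize_eq]
  exact (hcore.iterate _).toRedSigma

end Invariants

lemma realizeSeq_take_succ [Fintype C] (M : C → S → Prop) (l : List C) {t : ℕ}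
    (ht : t < l.length) :
    realizeSeq (ofMatrix M) (l.take (t + 1)) =
      (realizeSeq (ofMatrix M) (l.take t)).realize (l[t]'ht) := by
  rw [List.take_succ, List.getElem?_eq_getElem ht]
  show List.foldl realize (ofMatrix M) (List.take t l ++ (some (l[t]'ht)).toList) = _
  rw [List.foldl_append]
  rfl

end RBGraph

/-- the central character of an induced P7 cannot be the first of
the three characters of the path to be realized in a reduction. -/
theorem center_of_P7_not_first {S C : Type} [Fintype C] [DecidableEq C]
    (M : C → S → Prop) (s1 s2 s3 s4 : S) (c1 c2 c3 : C)
    (hc12 : c1 ≠ c2) (hc23 : c2 ≠ c3) (hc13 : c1 ≠ c3)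
    (hs12 : s1 ≠ s2) (hs13 : s1 ≠ s3) (hs14 : s1 ≠ s4)
    (hs23 : s2 ≠ s3) (hs24 : s2 ≠ s4) (hs34 : s3 ≠ s4)
    (e11 : M c1 s1) (e12 : M c1 s2) (e22 : M c2 s2) (e23 : M c2 s3)
    (e33 : M c3 s3) (e34 : M c3 s4)
    (n13 : ¬ M c1 s3) (n14 : ¬ M c1 s4) (n21 : ¬ M c2 s1) (n24 : ¬ M c2 s4)
    (n31 : ¬ M c3 s1) (n32 : ¬ M c3 s2)
    (l : List C) (hl : RBGraph.isReduction M l) :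
    ¬ (l.idxOf c2 < l.idxOf c1 ∧ l.idxOf c2 < l.idxOf c3) := by
  rintro ⟨h21, h23⟩
  obtain ⟨hnd, hmem, -, hsig⟩ := hl
  have hl1 : l.idxOf c1 < l.length := List.idxOf_lt_length_iff.mpr (hmem c1)
  have hl2 : l.idxOf c2 < l.length := List.idxOf_lt_length_iff.mpr (hmem c2)
  have hl3 : l.idxOf c3 < l.length := List.idxOf_lt_length_iff.mpr (hmem c3)
  -- elements at positions other than `indexOf a` differ from `a`
  have hgne : ∀ (a : C) (t : ℕ) (htl : t < l.length), t ≠ l.idxOf a →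
      a ∈ l → a ≠ l[t] := by
    intro a t htl hne hm heq
    have hia : l.idxOf a < l.length := List.idxOf_lt_length_iff.mpr hm
    have : l[l.idxOf a]'hia = l[t]'htl := by
      rw [List.getElem_idxOf hia, heq]
    exact hne ((hnd.getElem_inj_iff.mp this).symm)
  have inv0 : ∀ t, t ≤ l.idxOf c2 →
      RBGraph.Inv0 c1 c2 c3 s1 s2 s3 s4 (RBGraph.realizeSeq (RBGraph.ofMatrix M) (l.take t)) := by
    intro t
    induction t with
    | zero =>
      intro _
      exact ⟨e11, e12, e22, e23, e33, e34, fun _ h => h, fun _ h => h, fun _ h => h,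
        n13, n14, n21, n24, n31, n32⟩
    | succ t ih =>
      intro ht
      have htl : t < l.length := by omega
      rw [RBGraph.realizeSeq_take_succ M l htl]
      exact (ih (by omega)).realize
        (hgne c1 t htl (by omega) (hmem c1))
        (hgne c2 t htl (by omega) (hmem c2))
        (hgne c3 t htl (by omega) (hmem c3))
  have hinv1 : RBGraph.Inv1 c1 c2 c3 s1 s2 s3 s4
      (RBGraph.realizeSeq (RBGraph.ofMatrix M) (l.take (l.idxOf c2 + 1))) := by
    rw [RBGraph.realizeSeq_take_succ M l hl2, List.getElem_idxOf hl2]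
    exact (inv0 _ le_rfl).step2 hc12 hc23
  rcases le_total (l.idxOf c1) (l.idxOf c3) with hmin | hmin
  · -- `c1` is realized before `c3`
    have key : ∀ t, l.idxOf c2 + 1 ≤ t → t ≤ l.idxOf c1 →
        RBGraph.Inv1 c1 c2 c3 s1 s2 s3 s4 (RBGraph.realizeSeq (RBGraph.ofMatrix M) (l.take t)) := by
      intro t ht1
      induction t, ht1 using Nat.le_induction with
      | base => intro _; exact hinv1
      | succ t ht ih =>
        intro ht2
        have htl : t < l.length := by omega
        rw [RBGraph.realizeSeq_take_succ M l htl]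
        exact (ih (by omega)).realize
          (hgne c1 t htl (by omega) (hmem c1))
          (hgne c2 t htl (by omega) (hmem c2))
          (hgne c3 t htl (by omega) (hmem c3))
    have hσ : RBGraph.redSigma (RBGraph.realizeSeq (RBGraph.ofMatrix M) (l.take (l.idxOf c1 + 1))) := by
      rw [RBGraph.realizeSeq_take_succ M l hl1, List.getElem_idxOf hl1]
      exact (key _ (by omega) le_rfl).step1 hc12 hs13 hs14 hs34
    exact hsig (l.idxOf c1 + 1) (by omega) hσ
  · -- `c3` is realized before `c1`
    have key : ∀ t, l.idxOf c2 + 1 ≤ t → t ≤ l.idxOf c3 →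
        RBGraph.Inv1 c1 c2 c3 s1 s2 s3 s4 (RBGraph.realizeSeq (RBGraph.ofMatrix M) (l.take t)) := by
      intro t ht1
      induction t, ht1 using Nat.le_induction with
      | base => intro _; exact hinv1
      | succ t ht ih =>
        intro ht2
        have htl : t < l.length := by omega
        rw [RBGraph.realizeSeq_take_succ M l htl]
        exact (ih (by omega)).realize
          (hgne c1 t htl (by omega) (hmem c1))
          (hgne c2 t htl (by omega) (hmem c2))
          (hgne c3 t htl (by omega) (hmem c3))
    have hσ : RBGraph.redSigma (RBGraph.realizeSeq (RBGraph.ofMatrix M) (l.take (l.idxOf c3 + 1))) := by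
      rw [RBGraph.realizeSeq_take_succ M l hl3, List.getElem_idxOf hl3]
      exact (key _ (by omega) le_rfl).step3 hc23 hs12 hs14 hs24
    exact hsig (l.idxOf c3 + 1) (by omega) hσ
end

section
/- Let π = ⟨c1,...,cm⟩ be a reduction of G_M, and suppose for some 1 ≤ k < m that the connected components of G_RB^{k-1} and G_RB^k contain the same sets of vertices (i.e., realizing c_k creates no new connected component and isolates no species). Then the ordering π' obtained from π by swapping c_k and c_{k+1} is also a reduction of G_M. -/
open Classical

namespace RBGraph

variable {S C : Type}

/-- The pre-realization transform (before pruning). -/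
def pre (G : RBGraph S C) (c : C) : RBGraph S C :=
  ⟨fun c' s => G.black c' s ∧ c' ≠ c,
   fun c' s => G.red c' s ∨ (c' = c ∧ ¬ G.black c s ∧ G.sameComp c s)⟩

lemma realize_eq_prune_pre [Fintype C] (G : RBGraph S C) (c : C) :
    G.realize c = prune (G.pre c) := rfl

/-- Active characters carry no black edges. -/
def clean (G : RBGraph S C) : Prop := ∀ c s s', G.red c s → ¬ G.black c s'

/-- The key simulation relation between the original partial reduction (`G`)
and the swapped one (`G'`). -/
def REL (G G' : RBGraph S C) : Prop :=
  (∀ c s, G'.black c s ↔ G.black c s) ∧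
  (∀ c s, G'.red c s ↔ (G.red c s ∧ G'.sameComp c s)) ∧
  (∀ x y, G'.toSimple.Reachable x y → G.toSimple.Reachable x y)

lemma toSimple_adj_inr_inl {G : RBGraph S C} {c : C} {s : S} :
    G.toSimple.Adj (Sum.inr c) (Sum.inl s) ↔ G.adj c s := by
  constructor
  · rintro (⟨s', c', h, -⟩ | ⟨s', c', h1, h2, h3⟩)
    · simp at h
    · cases Sum.inr_injective h1; cases Sum.inl_injective h2; exact h3
  · intro h; exact Or.inr ⟨s, c, rfl, rfl, h⟩

lemma sameComp_of_adj {G : RBGraph S C} {c : C} {s : S} (h : G.adj c s) :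
    G.sameComp c s :=
  (toSimple_adj_inr_inl.2 h).reachable

lemma sameComp_of_red {G : RBGraph S C} {c : C} {s : S} (h : G.red c s) :
    G.sameComp c s := sameComp_of_adj (Or.inr h)

lemma toSimple_le {G G' : RBGraph S C} (h : ∀ c s, G'.adj c s → G.adj c s) :
    G'.toSimple ≤ G.toSimple := by
  rintro x y (⟨s, c, rfl, rfl, hadj⟩ | ⟨s, c, rfl, rfl, hadj⟩)
  · exact Or.inl ⟨s, c, rfl, rfl, h _ _ hadj⟩
  · exact Or.inr ⟨s, c, rfl, rfl, h _ _ hadj⟩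

lemma reach_mono {G G' : RBGraph S C} (h : ∀ c s, G'.adj c s → G.adj c s)
    {x y : S ⊕ C} (hr : G'.toSimple.Reachable x y) : G.toSimple.Reachable x y :=
  hr.mono (toSimple_le h)

lemma reach_of_isolated {G : RBGraph S C} {c : C} (h : ∀ s, ¬ G.adj c s)
    {x : S ⊕ C} (hr : G.toSimple.Reachable (Sum.inr c) x) : x = Sum.inr c := by
  obtain ⟨w⟩ := hr
  cases w with
  | nil => rfl
  | cons hadj p =>
    rcases hadj with ⟨s, c', heq, -⟩ | ⟨s, c', heq1, heq2, hadj⟩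
    · simp at heq
    · cases Sum.inr_injective heq1
      exact absurd hadj (h s)

lemma not_sameComp_of_isolated {G : RBGraph S C} {c : C} (h : ∀ s, ¬ G.adj c s)
    (s : S) : ¬ G.sameComp c s := by
  intro hr
  exact absurd (reach_of_isolated h hr) (by simp)

end RBGraph

namespace RBGraph

variable {S C : Type}

lemma pruneStep_black {G : RBGraph S C} {c s} :
    (pruneStep G).black c s ↔ G.black c s ∧ ¬ G.redUniversal c := Iff.rfl

lemma pruneStep_red {G : RBGraph S C} {c s} :
    (pruneStep G).red c s ↔ G.red c s ∧ ¬ G.redUniversal c := Iff.rfl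

lemma pruneStep_adj {G : RBGraph S C} {c s} (h : (pruneStep G).adj c s) : G.adj c s := by
  rcases h with h | h
  · exact Or.inl h.1
  · exact Or.inr h.1

lemma iterate_pruneStep_black {n : ℕ} : ∀ {G : RBGraph S C} {c s},
    (pruneStep^[n] G).black c s → G.black c s := by
  induction n with
  | zero => exact fun h => h
  | succ n ih =>
    intro G c s h
    rw [Function.iterate_succ_apply] at h
    exact (ih h).1

lemma iterate_pruneStep_red {n : ℕ} : ∀ {G : RBGraph S C} {c s},
    (pruneStep^[n] G).red c s → G.red c s := by
  induction n with
  | zero => exact fun h => h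
  | succ n ih =>
    intro G c s h
    rw [Function.iterate_succ_apply] at h
    exact (ih h).1

lemma iterate_pruneStep_adj {n : ℕ} {G : RBGraph S C} {c s}
    (h : (pruneStep^[n] G).adj c s) : G.adj c s := by
  rcases h with h | h
  · exact Or.inl (iterate_pruneStep_black h)
  · exact Or.inr (iterate_pruneStep_red h)

lemma pruneStep_fixed {G : RBGraph S C} (h : ∀ d, ¬ G.redUniversal d) :
    pruneStep G = G := by
  obtain ⟨b, r⟩ := G
  unfold pruneStep
  congr 1 <;> funext c s <;> exact propext ⟨fun hh => hh.1, fun hh => ⟨hh, h c⟩⟩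

lemma clean_pruneStep {G : RBGraph S C} (h : clean G) : clean (pruneStep G) :=
  fun c s s' hr hb => h c s s' hr.1 hb.1

lemma clean_pre {G : RBGraph S C} (h : clean G) (d : C) : clean (G.pre d) := by
  rintro c s s' (hr | ⟨rfl, -⟩) hb
  · exact h c s s' hr hb.1
  · exact hb.2 rfl

lemma clean_iterate_pruneStep {n : ℕ} {G : RBGraph S C} (h : clean G) :
    clean (pruneStep^[n] G) := by
  induction n with
  | zero => exact h
  | succ n ih => rw [Function.iterate_succ_apply']; exact clean_pruneStep ih

lemma clean_realize [Fintype C] {G : RBGraph S C} (h : clean G) (d : C) :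
    clean (G.realize d) := clean_iterate_pruneStep (clean_pre h d)

lemma clean_ofMatrix (M : C → S → Prop) : clean (ofMatrix M) := fun _ _ _ hr _ => hr

lemma clean_realizeSeq [Fintype C] {G : RBGraph S C} (h : clean G) (m : List C) :
    clean (realizeSeq G m) := by
  induction m generalizing G with
  | nil => exact h
  | cons d m ih => exact ih (clean_realize h d)

/-- Unrealized characters stay red-free. -/
lemma noRed_realize [Fintype C] {G : RBGraph S C} {c d : C} (hne : c ≠ d)
    (h : ∀ s, ¬ G.red c s) (s : S) : ¬ (G.realize d).red c s := by
  intro hr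
  rcases iterate_pruneStep_red hr with hr' | ⟨rfl, -⟩
  · exact h s hr'
  · exact hne rfl

lemma noRed_realizeSeq [Fintype C] {G : RBGraph S C} {c : C} {m : List C}
    (hm : c ∉ m) (h : ∀ s, ¬ G.red c s) : ∀ s, ¬ (realizeSeq G m).red c s := by
  induction m generalizing G with
  | nil => exact h
  | cons d m ih =>
    exact ih (fun hc => hm (List.mem_cons_of_mem _ hc))
      (noRed_realize (fun he => hm (he ▸ List.mem_cons_self)) h)

end RBGraph

namespace RBGraph

variable {S C : Type}

lemma reach_of_adj_reach {V : Type} {H' H : SimpleGraph V}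
    (h : ∀ x y, H'.Adj x y → H.Reachable x y) {x y : V}
    (hr : H'.Reachable x y) : H.Reachable x y := by
  obtain ⟨w⟩ := hr
  induction w with
  | nil => exact SimpleGraph.Reachable.refl _
  | cons hadj _ ih => exact (h _ _ hadj).trans ih

lemma rb_reach_of_adj_reach {G' G : RBGraph S C}
    (h : ∀ c s, G'.adj c s → G.toSimple.Reachable (Sum.inr c) (Sum.inl s)) {x y}
    (hr : G'.toSimple.Reachable x y) : G.toSimple.Reachable x y := by
  refine reach_of_adj_reach ?_ hr
  rintro x y (⟨s, c, rfl, rfl, hadj⟩ | ⟨s, c, rfl, rfl, hadj⟩)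
  · exact (h c s hadj).symm
  · exact h c s hadj

/-- Reachability in `pre G d` implies reachability in `G`. -/
lemma reach_pre_le {G : RBGraph S C} {d : C} {x y}
    (hr : (G.pre d).toSimple.Reachable x y) : G.toSimple.Reachable x y := by
  refine rb_reach_of_adj_reach ?_ hr
  rintro c s (⟨hbk, -⟩ | hred)
  · exact (toSimple_adj_inr_inl.2 (Or.inl hbk)).reachable
  · rcases hred with hred | ⟨rfl, -, hsc⟩
    · exact (toSimple_adj_inr_inl.2 (Or.inr hred)).reachable
    · exact hsc

lemma REL.refl (G : RBGraph S C) : REL G G :=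
  ⟨fun _ _ => Iff.rfl,
   fun c s => ⟨fun h => ⟨h, sameComp_of_red h⟩, fun h => h.1⟩,
   fun _ _ h => h⟩

lemma REL.trans {G G' G'' : RBGraph S C} (h1 : REL G G') (h2 : REL G' G'') :
    REL G G'' := by
  obtain ⟨b1, r1, m1⟩ := h1
  obtain ⟨b2, r2, m2⟩ := h2
  refine ⟨fun c s => (b2 c s).trans (b1 c s), fun c s => ?_, fun x y h => m1 _ _ (m2 _ _ h)⟩
  constructor
  · intro h
    obtain ⟨hr', hsc⟩ := (r2 c s).1 h
    exact ⟨((r1 c s).1 hr').1, hsc⟩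
  · rintro ⟨hr, hsc⟩
    exact (r2 c s).2 ⟨(r1 c s).2 ⟨hr, m2 _ _ hsc⟩, hsc⟩

lemma REL.adj {G G' : RBGraph S C} (h : REL G G') {c s} (ha : G'.adj c s) : G.adj c s := by
  rcases ha with ha | ha
  · exact Or.inl ((h.1 c s).1 ha)
  · exact Or.inr ((h.2.1 c s).1 ha).1

lemma REL.reach {G G' : RBGraph S C} (h : REL G G') {x y}
    (hr : G'.toSimple.Reachable x y) : G.toSimple.Reachable x y := h.2.2 x y hr

/-- REL is preserved by the pre-realization transform (same character). -/
lemma REL.pre {G G' : RBGraph S C} (h : REL G G') (d : C) :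
    REL (G.pre d) (G'.pre d) := by
  obtain ⟨hb, hr, hm⟩ := h
  have hadj : ∀ c s, (G'.pre d).adj c s → (G.pre d).adj c s := by
    rintro c s (⟨hbk, hne⟩ | hred)
    · exact Or.inl ⟨(hb c s).1 hbk, hne⟩
    · rcases hred with hred | ⟨rfl, hnb, hsc⟩
      · exact Or.inr (Or.inl ((hr c s).1 hred).1)
      · exact Or.inr (Or.inr ⟨rfl, fun hbk => hnb ((hb c s).2 hbk), hm _ _ hsc⟩)
  refine ⟨fun c s => ⟨fun hh => ⟨(hb c s).1 hh.1, hh.2⟩, fun hh => ⟨(hb c s).2 hh.1, hh.2⟩⟩,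
    fun c s => ?_, fun x y hxy => hxy.mono (toSimple_le hadj)⟩
  constructor
  · intro hh
    refine ⟨?_, sameComp_of_red hh⟩
    rcases hh with hred | ⟨rfl, hnb, hsc⟩
    · exact Or.inl ((hr c s).1 hred).1
    · exact Or.inr ⟨rfl, fun hbk => hnb ((hb c s).2 hbk), hm _ _ hsc⟩
  · rintro ⟨hred, hsc⟩
    have hsc' : G'.sameComp c s := reach_pre_le hsc
    rcases hred with hred | ⟨rfl, hnb, -⟩
    · exact Or.inl ((hr c s).2 ⟨hred, hsc'⟩)
    · exact Or.inr ⟨rfl, fun hbk => hnb ((hb c s).1 hbk), hsc'⟩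

end RBGraph

namespace RBGraph

variable {S C : Type}

lemma pruneStep_black_of_clean {G : RBGraph S C} (h : clean G) {e s} :
    (pruneStep G).black e s ↔ G.black e s := by
  refine ⟨fun hh => hh.1, fun hh => ⟨hh, fun hru => ?_⟩⟩
  obtain ⟨s₀, hs₀⟩ := hru.1
  exact h e s₀ s hs₀ hh

lemma isolated_pruneStep_of_RU {G : RBGraph S C} {e : C} (h : G.redUniversal e) :
    ∀ s, ¬ (pruneStep G).adj e s := by
  rintro s (hh | hh) <;> exact hh.2 h

/-- If `e` is red-universal in `G` then in `G'` it is either red-universal or edgeless. -/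
lemma RU_transfer {G G' : RBGraph S C} (hrel : REL G G') (hc : clean G) {e : C}
    (h : G.redUniversal e) : G'.redUniversal e ∨ ∀ s, ¬ G'.adj e s := by
  by_cases hact : G'.active e
  · exact Or.inl ⟨hact, fun s hsc => (hrel.2.1 e s).2 ⟨h.2 s (hrel.reach hsc), hsc⟩⟩
  · right
    obtain ⟨s₀, hs₀⟩ := h.1
    rintro s (hh | hh)
    · exact hc e s₀ s hs₀ ((hrel.1 e s).1 hh)
    · exact hact ⟨s, hh⟩

lemma REL.pruneStep {G G' : RBGraph S C} (hrel : REL G G')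
    (hc : clean G) (hc' : clean G') : REL (RBGraph.pruneStep G) (RBGraph.pruneStep G') := by
  obtain ⟨hb, hr, hm⟩ := hrel
  have hrel : REL G G' := ⟨hb, hr, hm⟩
  have hadj : ∀ c s, (RBGraph.pruneStep G').adj c s → (RBGraph.pruneStep G).adj c s := by
    rintro c s hh
    have hnru' : ¬ G'.redUniversal c := by
      rcases hh with hh | hh <;> exact hh.2
    have hadjG : G.adj c s := hrel.adj (pruneStep_adj hh)
    have hnru : ¬ G.redUniversal c := by
      intro hru
      rcases RU_transfer hrel hc hru with h1 | h1
      · exact hnru' h1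
      · exact h1 s (pruneStep_adj hh)
    rcases hadjG with h1 | h1
    · exact Or.inl ⟨h1, hnru⟩
    · exact Or.inr ⟨h1, hnru⟩
  refine ⟨fun c s => (pruneStep_black_of_clean hc').trans
      ((hb c s).trans (pruneStep_black_of_clean hc).symm),
    fun c s => ?_, fun x y hxy => hxy.mono (toSimple_le hadj)⟩
  by_cases hru' : G'.redUniversal c
  · constructor
    · rintro ⟨-, hnru⟩; exact absurd hru' hnru
    · rintro ⟨-, hsc⟩
      exact absurd hsc (not_sameComp_of_isolated (isolated_pruneStep_of_RU hru') s)
  · by_cases hru : G.redUniversal c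
    · rcases RU_transfer hrel hc hru with h1 | h1
      · exact absurd h1 hru'
      · constructor
        · rintro ⟨hh, -⟩; exact absurd (Or.inr hh) (h1 s)
        · rintro ⟨⟨-, hnru⟩, -⟩; exact absurd hru hnru
    · constructor
      · rintro ⟨hh, -⟩
        exact ⟨⟨((hr c s).1 hh).1, hru⟩, sameComp_of_red ⟨hh, hru'⟩⟩
      · rintro ⟨⟨hredG, -⟩, hsc⟩
        have hsc' : G'.sameComp c s := reach_mono (fun _ _ => pruneStep_adj) hsc
        exact ⟨(hr c s).2 ⟨hredG, hsc'⟩, hru'⟩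

lemma REL.pruneStep_right {G G' : RBGraph S C} (hrel : REL G G')
    (hc' : clean G') : REL G (RBGraph.pruneStep G') := by
  obtain ⟨hb, hr, hm⟩ := hrel
  refine ⟨fun c s => (pruneStep_black_of_clean hc').trans (hb c s),
    fun c s => ?_,
    fun x y hxy => hm x y (reach_mono (fun _ _ => pruneStep_adj) hxy)⟩
  by_cases hru' : G'.redUniversal c
  · constructor
    · rintro ⟨-, hnru⟩; exact absurd hru' hnru
    · rintro ⟨-, hsc⟩
      exact absurd hsc (not_sameComp_of_isolated (isolated_pruneStep_of_RU hru') s)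
  · constructor
    · rintro ⟨hh, -⟩
      exact ⟨((hr c s).1 hh).1, sameComp_of_red ⟨hh, hru'⟩⟩
    · rintro ⟨hredG, hsc⟩
      have hsc' : G'.sameComp c s := reach_mono (fun _ _ => pruneStep_adj) hsc
      exact ⟨(hr c s).2 ⟨hredG, hsc'⟩, hru'⟩

lemma REL.iterate_pruneStep {G G' : RBGraph S C} (hrel : REL G G')
    (hc : clean G) (hc' : clean G') (n : ℕ) :
    REL (RBGraph.pruneStep^[n] G) (RBGraph.pruneStep^[n] G') := by
  induction n with
  | zero => exact hrel
  | succ n ih =>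
    rw [Function.iterate_succ_apply', Function.iterate_succ_apply']
    exact ih.pruneStep (clean_iterate_pruneStep hc) (clean_iterate_pruneStep hc')

lemma REL.iterate_pruneStep_right {G G' : RBGraph S C} (hrel : REL G G')
    (hc' : clean G') (n : ℕ) : REL G (RBGraph.pruneStep^[n] G') := by
  induction n with
  | zero => exact hrel
  | succ n ih =>
    rw [Function.iterate_succ_apply']
    exact ih.pruneStep_right (clean_iterate_pruneStep hc')

lemma REL.realize [Fintype C] {G G' : RBGraph S C} (hrel : REL G G')
    (hc : clean G) (hc' : clean G') (d : C) : REL (G.realize d) (G'.realize d) :=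
  (hrel.pre d).iterate_pruneStep (clean_pre hc d) (clean_pre hc' d) _

lemma REL.realizeSeq [Fintype C] {G G' : RBGraph S C} (hrel : REL G G')
    (hc : clean G) (hc' : clean G') (m : List C) :
    REL (realizeSeq G m) (realizeSeq G' m) := by
  induction m generalizing G G' with
  | nil => exact hrel
  | cons d m ih => exact ih (hrel.realize hc hc' d) (clean_realize hc d) (clean_realize hc' d)

end RBGraph

namespace RBGraph

variable {S C : Type}

lemma edgeless_of_REL {G G' : RBGraph S C} (hrel : REL G G') (h : edgeless G) :
    edgeless G' := fun c s hadj => h c s (hrel.adj hadj)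

lemma redSigma_of_REL {G G' : RBGraph S C} (hrel : REL G G') (h : redSigma G') :
    redSigma G := by
  obtain ⟨c1, c2, s1, s2, s3, hc12, h12, h23, h13, r11, r12, r22, r23, na13, na21⟩ := h
  obtain ⟨hb, hr, hm⟩ := hrel
  have e1 : G'.toSimple.Adj (Sum.inr c1) (Sum.inl s2) := toSimple_adj_inr_inl.2 (Or.inr r12)
  have e2 : G'.toSimple.Adj (Sum.inr c2) (Sum.inl s2) := toSimple_adj_inr_inl.2 (Or.inr r22)
  have e3 : G'.toSimple.Adj (Sum.inr c2) (Sum.inl s3) := toSimple_adj_inr_inl.2 (Or.inr r23)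
  have e0 : G'.toSimple.Adj (Sum.inr c1) (Sum.inl s1) := toSimple_adj_inr_inl.2 (Or.inr r11)
  refine ⟨c1, c2, s1, s2, s3, hc12, h12, h23, h13,
    ((hr c1 s1).1 r11).1, ((hr c1 s2).1 r12).1, ((hr c2 s2).1 r22).1, ((hr c2 s3).1 r23).1,
    ?_, ?_⟩
  · rintro (hbk | hred)
    · exact na13 (Or.inl ((hb c1 s3).2 hbk))
    · have hsc : G'.sameComp c1 s3 :=
        e1.reachable.trans (e2.reachable.symm.trans e3.reachable)
      exact na13 (Or.inr ((hr c1 s3).2 ⟨hred, hsc⟩))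
  · rintro (hbk | hred)
    · exact na21 (Or.inl ((hb c2 s1).2 hbk))
    · have hsc : G'.sameComp c2 s1 :=
        e2.reachable.trans (e1.reachable.symm.trans e0.reachable)
      exact na21 (Or.inr ((hr c2 s1).2 ⟨hred, hsc⟩))

lemma redSigma_pruneStep {G : RBGraph S C} (h : redSigma G) :
    redSigma (pruneStep G) := by
  obtain ⟨c1, c2, s1, s2, s3, hc12, h12, h23, h13, r11, r12, r22, r23, na13, na21⟩ := h
  have e1 : G.toSimple.Adj (Sum.inr c1) (Sum.inl s2) := toSimple_adj_inr_inl.2 (Or.inr r12)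
  have e2 : G.toSimple.Adj (Sum.inr c2) (Sum.inl s2) := toSimple_adj_inr_inl.2 (Or.inr r22)
  have e3 : G.toSimple.Adj (Sum.inr c2) (Sum.inl s3) := toSimple_adj_inr_inl.2 (Or.inr r23)
  have e0 : G.toSimple.Adj (Sum.inr c1) (Sum.inl s1) := toSimple_adj_inr_inl.2 (Or.inr r11)
  have hnru1 : ¬ G.redUniversal c1 := by
    intro hru
    exact na13 (Or.inr (hru.2 s3 (e1.reachable.trans (e2.reachable.symm.trans e3.reachable))))
  have hnru2 : ¬ G.redUniversal c2 := by
    intro hru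
    exact na21 (Or.inr (hru.2 s1 (e2.reachable.trans (e1.reachable.symm.trans e0.reachable))))
  refine ⟨c1, c2, s1, s2, s3, hc12, h12, h23, h13,
    ⟨r11, hnru1⟩, ⟨r12, hnru1⟩, ⟨r22, hnru2⟩, ⟨r23, hnru2⟩,
    fun hadj => na13 (pruneStep_adj hadj), fun hadj => na21 (pruneStep_adj hadj)⟩

lemma redSigma_iterate_pruneStep {G : RBGraph S C} (h : redSigma G) (n : ℕ) :
    redSigma (pruneStep^[n] G) := by
  induction n with
  | zero => exact h
  | succ n ih => rw [Function.iterate_succ_apply']; exact redSigma_pruneStep ih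

lemma redSigma_pre {G : RBGraph S C} {d : C} (hd : ∀ s, ¬ G.red d s)
    (h : redSigma G) : redSigma (G.pre d) := by
  obtain ⟨c1, c2, s1, s2, s3, hc12, h12, h23, h13, r11, r12, r22, r23, na13, na21⟩ := h
  have hne1 : c1 ≠ d := fun he => hd s1 (he ▸ r11)
  have hne2 : c2 ≠ d := fun he => hd s2 (he ▸ r22)
  refine ⟨c1, c2, s1, s2, s3, hc12, h12, h23, h13,
    Or.inl r11, Or.inl r12, Or.inl r22, Or.inl r23, ?_, ?_⟩
  · rintro (⟨hbk, -⟩ | hred)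
    · exact na13 (Or.inl hbk)
    · rcases hred with hred | ⟨he, -⟩
      · exact na13 (Or.inr hred)
      · exact hne1 he
  · rintro (⟨hbk, -⟩ | hred)
    · exact na21 (Or.inl hbk)
    · rcases hred with hred | ⟨he, -⟩
      · exact na21 (Or.inr hred)
      · exact hne2 he

lemma redSigma_realize [Fintype C] {G : RBGraph S C} {d : C} (hd : ∀ s, ¬ G.red d s)
    (h : redSigma G) : redSigma (G.realize d) :=
  redSigma_iterate_pruneStep (redSigma_pre hd h) _

/-- Under the component-preservation hypothesis, realizing `c` performs no pruning. -/
lemma realize_eq_pre [Fintype C] {G : RBGraph S C} {c : C}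
    (hs : ∀ x y, G.toSimple.Reachable x y ↔ (G.realize c).toSimple.Reachable x y) :
    G.realize c = G.pre c := by
  have hpos : 0 < Fintype.card C := Fintype.card_pos_iff.2 ⟨c⟩
  have noRU : ∀ d, ¬ (G.pre c).redUniversal d := by
    intro d hru
    obtain ⟨s, hred⟩ := hru.1
    have hreachG : G.toSimple.Reachable (Sum.inr d) (Sum.inl s) := by
      rcases hred with hred | ⟨rfl, -, hsc⟩
      · exact (toSimple_adj_inr_inl.2 (Or.inr hred)).reachable
      · exact hsc
    have hiso : ∀ t, ¬ (G.realize c).adj d t := by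
      intro t hadj
      rw [realize_eq_prune_pre, prune] at hadj
      obtain ⟨n, hn⟩ : ∃ n, Fintype.card C = n + 1 :=
        ⟨Fintype.card C - 1, (Nat.succ_pred_eq_of_pos hpos).symm⟩
      rw [hn, Function.iterate_succ_apply] at hadj
      exact isolated_pruneStep_of_RU hru t (iterate_pruneStep_adj hadj)
    have := reach_of_isolated hiso ((hs _ _).1 hreachG)
    simp at this
  rw [realize_eq_prune_pre, prune, Function.iterate_fixed (pruneStep_fixed noRU)]

/-- Base-case swap: the two orders of pre-realization of `c` and `c'` are REL-related. -/
lemma REL_swap_pre {G : RBGraph S C} {c c' : C} (hne : c' ≠ c)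
    (hs : ∀ x y, (G.pre c).toSimple.Reachable x y ↔ G.toSimple.Reachable x y) :
    REL ((G.pre c).pre c') ((G.pre c').pre c) := by
  have hadj : ∀ e s, ((G.pre c').pre c).adj e s → ((G.pre c).pre c').adj e s := by
    rintro e s (⟨⟨hbk, h1⟩, h2⟩ | hred)
    · exact Or.inl ⟨⟨hbk, h2⟩, h1⟩
    · rcases hred with hred | ⟨rfl, hnb, hsc⟩
      · rcases hred with hred | ⟨rfl, hnb, hsc⟩
        · exact Or.inr (Or.inl (Or.inl hred))
        · -- e = c', star of c' computed in G
          refine Or.inr (Or.inr ⟨rfl, fun hbk => hnb hbk.1, (hs _ _).2 hsc⟩)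
      · -- e = c, star of c computed in pre G c'
        exact Or.inr (Or.inl (Or.inr ⟨rfl, fun hbk => hnb ⟨hbk, hne.symm⟩, reach_pre_le hsc⟩))
  refine ⟨fun e s => ⟨fun ⟨⟨hbk, h1⟩, h2⟩ => ⟨⟨hbk, h2⟩, h1⟩, fun ⟨⟨hbk, h1⟩, h2⟩ => ⟨⟨hbk, h2⟩, h1⟩⟩,
    fun e s => ?_, fun x y hxy => hxy.mono (toSimple_le hadj)⟩
  constructor
  · intro hh
    refine ⟨?_, sameComp_of_red hh⟩
    rcases hh with hred | ⟨rfl, hnb, hsc⟩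
    · rcases hred with hred | ⟨rfl, hnb, hsc⟩
      · exact Or.inl (Or.inl hred)
      · exact Or.inr ⟨rfl, fun hbk => hnb hbk.1, (hs _ _).2 hsc⟩
    · exact Or.inl (Or.inr ⟨rfl, fun hbk => hnb ⟨hbk, Ne.symm hne⟩, reach_pre_le hsc⟩)
  · rintro ⟨hx, hsc⟩
    rcases hx with hred | ⟨rfl, hnb, hsc'⟩
    · rcases hred with hred | ⟨rfl, hnb, hsc'⟩
      · exact Or.inl (Or.inl hred)
      · -- e = c : use that sameComp holds in pre G c' via hsc
        exact Or.inr ⟨rfl, fun hbk => hnb hbk.1, reach_pre_le hsc⟩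
    · -- e = c' : star computed in pre G c, transfer via hs
      exact Or.inl (Or.inr ⟨rfl, fun hbk => hnb ⟨hbk, hne⟩, (hs _ _).1 hsc'⟩)

end RBGraph

namespace RBGraph

variable {S C : Type}

lemma realizeSeq_append [Fintype C] (G : RBGraph S C) (m1 m2 : List C) :
    realizeSeq G (m1 ++ m2) = realizeSeq (realizeSeq G m1) m2 :=
  List.foldl_append

end RBGraph

open RBGraph

/-- Swapping lemma. -/
theorem swap_lemma {S C : Type} [Fintype C] (M : C → S → Prop)
    (l : List C) (hl : RBGraph.isReduction M l) (i : ℕ) (hi : i + 1 < l.length)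
    (hsame : ∀ x y : S ⊕ C,
      (RBGraph.partialRed M l i).toSimple.Reachable x y ↔
      (RBGraph.partialRed M l (i + 1)).toSimple.Reachable x y) :
    RBGraph.isReduction M
      (l.take i ++ [l.get ⟨i + 1, hi⟩, l.get ⟨i, Nat.lt_of_succ_lt hi⟩] ++ l.drop (i + 2)) := by
  classical
  obtain ⟨hnd, hmem, hedg, hsig⟩ := hl
  have hil : i < l.length := Nat.lt_of_succ_lt hi
  set c : C := l.get ⟨i, Nat.lt_of_succ_lt hi⟩ with hcdef
  set c' : C := l.get ⟨i + 1, hi⟩ with hc'def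
  -- list identities
  have ht1 : l.take (i + 1) = l.take i ++ [c] := by
    rw [List.take_succ, List.getElem?_eq_getElem hil]
    simp [hcdef]
  have ht2 : l.take (i + 2) = l.take i ++ [c, c'] := by
    rw [show i + 2 = (i + 1) + 1 from rfl, List.take_succ, List.getElem?_eq_getElem hi, ht1]
    simp [hc'def]
  have hlsplit : l = l.take i ++ (c :: c' :: l.drop (i + 2)) := by
    conv_lhs => rw [← List.take_append_drop (i + 2) l]
    rw [ht2]; simp
  -- nodup consequences
  have hnd' := hnd
  rw [hlsplit, List.nodup_append] at hnd'
  obtain ⟨-, hnd2, hdisj⟩ := hnd'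
  have hcc' : c ≠ c' := by
    intro he
    exact (List.nodup_cons.1 hnd2).1 (he ▸ List.mem_cons_self)
  have hcnotin : c ∉ l.take i := fun h => hdisj _ h _ List.mem_cons_self rfl
  -- graphs
  set G0 : RBGraph S C := realizeSeq (ofMatrix M) (l.take i) with hG0def
  have hcleanG0 : clean G0 := clean_realizeSeq (clean_ofMatrix M) _
  have hG1 : realizeSeq (ofMatrix M) (l.take (i + 1)) = G0.realize c := by
    rw [ht1, realizeSeq_append]; rfl
  have hsame' : ∀ x y : S ⊕ C,
      G0.toSimple.Reachable x y ↔ (G0.realize c).toSimple.Reachable x y := by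
    intro x y
    have := hsame x y
    unfold partialRed at this
    rwa [hG1] at this
  have hL3 : G0.realize c = G0.pre c := realize_eq_pre hsame'
  -- base case REL
  set A0 : RBGraph S C := realizeSeq (ofMatrix M) (l.take (i + 2)) with hA0def
  set B0 : RBGraph S C := realizeSeq (ofMatrix M) (l.take i ++ [c', c]) with hB0def
  have hA0eq : A0 = prune ((G0.pre c).pre c') := by
    rw [hA0def, ht2, show l.take i ++ [c, c'] = (l.take i ++ [c]) ++ [c'] by simp,
      realizeSeq_append, realizeSeq_append]
    show (G0.realize c).realize c' = _
    rw [hL3]; rfl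
  have hB0eq : B0 = prune ((prune (G0.pre c')).pre c) := by
    rw [hB0def, show l.take i ++ [c', c] = (l.take i ++ [c']) ++ [c] by simp,
      realizeSeq_append, realizeSeq_append]
    rfl
  have hswap : REL ((G0.pre c).pre c') ((G0.pre c').pre c) := by
    refine REL_swap_pre (Ne.symm hcc') ?_
    intro x y
    rw [← hL3]
    exact (hsame' x y).symm
  have hchain : REL ((G0.pre c').pre c) ((prune (G0.pre c')).pre c) :=
    REL.pre ((REL.refl (G0.pre c')).iterate_pruneStep_right (clean_pre hcleanG0 c') _) c
  have hbase : REL A0 B0 := by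
    rw [hA0eq, hB0eq]
    exact (hswap.trans hchain).iterate_pruneStep
      (clean_pre (clean_pre hcleanG0 c) c')
      (clean_pre (clean_iterate_pruneStep (clean_pre hcleanG0 c')) c) _
  have hcleanA0 : clean A0 := clean_realizeSeq (clean_ofMatrix M) _
  have hcleanB0 : clean B0 := clean_realizeSeq (clean_ofMatrix M) _
  have hREL : ∀ m : List C, REL (realizeSeq A0 m) (realizeSeq B0 m) :=
    fun m => hbase.realizeSeq hcleanA0 hcleanB0 m
  -- the swapped list
  set l' : List C := l.take i ++ [c', c] ++ l.drop (i + 2) with hl'def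
  have hperm : l'.Perm l := by
    rw [hl'def]
    conv_rhs => rw [hlsplit]
    rw [List.append_assoc]
    exact List.Perm.append_left (l.take i) (List.Perm.swap c c' (l.drop (i + 2)))
  have hlen : l'.length = l.length := hperm.length_eq
  have hlentake : (l.take i).length = i := by
    rw [List.length_take]; omega
  refine ⟨hperm.symm.nodup hnd, fun x => (hperm.mem_iff).2 (hmem x), ?_, ?_⟩
  · -- edgeless
    have h1 : realizeSeq (ofMatrix M) l' = realizeSeq B0 (l.drop (i + 2)) := by
      rw [hl'def, List.append_assoc, realizeSeq_append,
        show ([c', c] ++ l.drop (i + 2) : List C) = [c', c] ++ l.drop (i + 2) from rfl,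
        realizeSeq_append, hB0def, realizeSeq_append]
    have h2 : realizeSeq (ofMatrix M) l = realizeSeq A0 (l.drop (i + 2)) := by
      conv_lhs => rw [← List.take_append_drop (i + 2) l]
      rw [realizeSeq_append, hA0def]
    rw [h1]
    rw [h2] at hedg
    exact edgeless_of_REL (hREL _) hedg
  · -- no red sigma at any prefix
    intro k hk
    rw [hlen] at hk
    by_cases hki : k ≤ i
    · have hT : l'.take k = l.take k := by
        rw [hl'def, List.append_assoc, List.take_append, hlentake,
          Nat.sub_eq_zero_of_le hki, List.take_zero, List.append_nil,
          List.take_take, min_eq_left hki]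
      rw [hT]
      exact hsig k (le_trans hki (le_of_lt hil))
    · by_cases hki1 : k = i + 1
      · subst hki1
        have hT : l'.take (i + 1) = l.take i ++ [c'] := by
          rw [hl'def, List.append_assoc, List.take_append, hlentake,
            List.take_of_length_le (by rw [hlentake]; omega : (l.take i).length ≤ i + 1),
            Nat.add_sub_cancel_left]
          rfl
        rw [hT]
        intro hsg
        have hcini : c ∉ l.take i ++ [c'] := by
          intro h
          rcases List.mem_append.1 h with h | h
          · exact hcnotin h
          · exact hcc' (List.mem_singleton.1 h)
        have hred2 : ∀ s, ¬ (realizeSeq (ofMatrix M) (l.take i ++ [c'])).red c s :=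
          noRed_realizeSeq hcini (fun _ h => h)
        have hsg2 : redSigma ((realizeSeq (ofMatrix M) (l.take i ++ [c'])).realize c) :=
          redSigma_realize hred2 hsg
        have hBe : (realizeSeq (ofMatrix M) (l.take i ++ [c'])).realize c = B0 := by
          rw [hB0def, show l.take i ++ [c', c] = (l.take i ++ [c']) ++ [c] by simp,
            realizeSeq_append (ofMatrix M) (l.take i ++ [c']) [c]]
          rfl
        rw [hBe] at hsg2
        exact hsig (i + 2) (by omega) (redSigma_of_REL hbase hsg2)
      · have hki2 : i + 2 ≤ k := by omega
        have hlen2 : (l.take i ++ [c', c]).length = i + 2 := by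
          simp [hlentake]
        have hT : l'.take k = (l.take i ++ [c', c]) ++ (l.drop (i + 2)).take (k - (i + 2)) := by
          rw [hl'def, List.take_append, hlen2,
            List.take_of_length_le (by omega : (l.take i ++ [c', c]).length ≤ k)]
        have hTo : l.take k = l.take (i + 2) ++ (l.drop (i + 2)).take (k - (i + 2)) := by
          conv_lhs => rw [show k = (i + 2) + (k - (i + 2)) by omega]
          exact List.take_add
        rw [hT]
        intro hsg
        apply hsig k hk
        rw [hTo, realizeSeq_append]
        rw [realizeSeq_append, ← hB0def] at hsg
        exact redSigma_of_REL (hREL _) hsg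
end

section
/- Let G_M be a maximal connected reducible species-character graph. Then for every reduction π and every 1 ≤ k < m, the partial reduction G_RB^k(π) contains a single connected component (ignoring isolated vertices) and has at least one active character. -/
open Classical

namespace PRaux
open RBGraph Sum

variable {S C : Type}

/-! ### Generic reachability tools -/

lemma reach_ind {V : Type*} {G : SimpleGraph V} (P : V → Prop)
    (hP : ∀ u v, G.Adj u v → P u → P v) {u v : V}
    (h : G.Reachable u v) (hu : P u) : P v := by
  obtain ⟨w⟩ := h
  induction w with
  | nil => exact hu
  | cons hadj _ ih => exact ih (hP _ _ hadj hu)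

lemma adj_cs {G : RBGraph S C} {c : C} {s : S} (h : G.adj c s) :
    G.toSimple.Adj (inr c) (inl s) := Or.inr ⟨s, c, rfl, rfl, h⟩

lemma adj_sc {G : RBGraph S C} {c : C} {s : S} (h : G.adj c s) :
    G.toSimple.Adj (inl s) (inr c) := Or.inl ⟨s, c, rfl, rfl, h⟩

lemma reach_cs {G : RBGraph S C} {c : C} {s : S} (h : G.adj c s) :
    G.toSimple.Reachable (inr c) (inl s) := (adj_cs h).reachable

lemma toSimple_adj_cases {G : RBGraph S C} {x y : S ⊕ C} (h : G.toSimple.Adj x y) :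
    (∃ s c, x = inl s ∧ y = inr c ∧ G.adj c s) ∨
    (∃ s c, x = inr c ∧ y = inl s ∧ G.adj c s) := h

/-! ### Prune stage machinery -/

/-- The `j`-th stage of pruning. -/
def stg (H : RBGraph S C) (j : ℕ) : RBGraph S C := pruneStep^[j] H

/-- `x` has not been pruned before stage `j`. -/
def aliveAt (H : RBGraph S C) (j : ℕ) (x : C) : Prop :=
  ∀ i < j, ¬ (stg H i).redUniversal x

lemma stg_zero (H : RBGraph S C) : stg H 0 = H := rfl

lemma stg_succ (H : RBGraph S C) (j : ℕ) : stg H (j+1) = pruneStep (stg H j) :=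
  Function.iterate_succ_apply' _ _ _

lemma aliveAt_zero (H : RBGraph S C) (x : C) : aliveAt H 0 x := by
  intro i hi; omega

lemma aliveAt_succ {H : RBGraph S C} {j : ℕ} {x : C} :
    aliveAt H (j+1) x ↔ aliveAt H j x ∧ ¬ (stg H j).redUniversal x := by
  constructor
  · intro h; exact ⟨fun i hi => h i (by omega), h j (by omega)⟩
  · rintro ⟨h1, h2⟩ i hi
    rcases Nat.lt_succ_iff_lt_or_eq.mp hi with h | rfl
    · exact h1 i h
    · exact h2

lemma aliveAt_mono {H : RBGraph S C} {i j : ℕ} (hij : i ≤ j) {x : C}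
    (h : aliveAt H j x) : aliveAt H i x := fun t ht => h t (lt_of_lt_of_le ht hij)

lemma stg_spec (H : RBGraph S C) (j : ℕ) (x : C) (s : S) :
    ((stg H j).black x s ↔ H.black x s ∧ aliveAt H j x) ∧
    ((stg H j).red x s ↔ H.red x s ∧ aliveAt H j x) := by
  induction j with
  | zero => simp [stg_zero, aliveAt_zero]
  | succ j ih =>
    rw [stg_succ]
    constructor
    · show (stg H j).black x s ∧ ¬ (stg H j).redUniversal x ↔ _
      rw [ih.1, aliveAt_succ]; tauto
    · show (stg H j).red x s ∧ ¬ (stg H j).redUniversal x ↔ _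
      rw [ih.2, aliveAt_succ]; tauto

lemma stg_black {H : RBGraph S C} {j : ℕ} {x : C} {s : S} :
    (stg H j).black x s ↔ H.black x s ∧ aliveAt H j x := (stg_spec H j x s).1

lemma stg_red {H : RBGraph S C} {j : ℕ} {x : C} {s : S} :
    (stg H j).red x s ↔ H.red x s ∧ aliveAt H j x := (stg_spec H j x s).2

lemma univ_active {G : RBGraph S C} {x : C} (h : G.redUniversal x) : G.active x := h.1

/-- a character inactive in `H` is never red-universal at any stage. -/
lemma inactive_aliveAt {H : RBGraph S C} {x : C} (hx : ¬ H.active x) (j : ℕ) :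
    aliveAt H j x := by
  intro i _ hu
  obtain ⟨s, hs⟩ := hu.1
  exact hx ⟨s, (stg_red.mp hs).1⟩

lemma dying {H : RBGraph S C} {j : ℕ} {x : C} (h : ¬ aliveAt H j x) :
    ∃ i < j, (stg H i).redUniversal x ∧ aliveAt H i x := by
  induction j with
  | zero => exact absurd (aliveAt_zero H x) h
  | succ j ih =>
    by_cases hj : aliveAt H j x
    · refine ⟨j, by omega, ?_, hj⟩
      by_contra hu
      exact h (aliveAt_succ.mpr ⟨hj, hu⟩)
    · obtain ⟨i, hi, h2⟩ := ih hj
      exact ⟨i, by omega, h2⟩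

lemma prune_eq_stg [Fintype C] (H : RBGraph S C) : prune H = stg H (Fintype.card C) := rfl

lemma realize_eq [Fintype C] (G : RBGraph S C) (c : C) :
    realize G c = prune ⟨fun c' s => G.black c' s ∧ c' ≠ c,
      fun c' s => G.red c' s ∨ (c' = c ∧ ¬ G.black c s ∧ G.sameComp c s)⟩ := rfl

lemma pruneStep_eq_of_no_univ {G : RBGraph S C} (h : ∀ x, ¬ G.redUniversal x) :
    pruneStep G = G := by
  cases G with
  | mk b r =>
    unfold pruneStep
    congr 1 <;> funext c s <;> exact propext ⟨fun h' => h'.1, fun h' => ⟨h', h c⟩⟩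

lemma stg_const_of_no_univ {H : RBGraph S C} {j : ℕ}
    (h : ∀ x, ¬ (stg H j).redUniversal x) (r : ℕ) : stg H (j + r) = stg H j := by
  induction r with
  | zero => rfl
  | succ r ih => rw [← Nat.add_assoc, stg_succ, ih, pruneStep_eq_of_no_univ h]

/-- Stability: the pruned graph has no red-universal character. -/
lemma prune_stable [Fintype C] (H : RBGraph S C) (x : C) :
    ¬ (prune H).redUniversal x := by
  classical
  set N := Fintype.card C with hN
  intro hu
  obtain ⟨s0, hs0⟩ := hu.1
  rw [prune_eq_stg] at hs0
  have hxal : aliveAt H N x := (stg_red.mp hs0).2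
  by_cases hex : ∃ j < N, ∀ y, ¬ (stg H j).redUniversal y
  · obtain ⟨j, hj, hno⟩ := hex
    have : stg H N = stg H j := by
      have := stg_const_of_no_univ hno (N - j)
      rwa [Nat.add_sub_cancel' (le_of_lt hj)] at this
    rw [prune_eq_stg, this] at hu
    exact hno x hu
  · push_neg at hex
    -- strict descent of the alive set
    set A : ℕ → Finset C := fun j => Finset.univ.filter (fun y => aliveAt H j y) with hA
    have hmono : ∀ j, A (j+1) ⊆ A j := by
      intro j y hy
      simp only [hA, Finset.mem_filter, Finset.mem_univ, true_and] at hy ⊢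
      exact aliveAt_mono (by omega) hy
    have hstrict : ∀ j < N, (A (j+1)).card < (A j).card := by
      intro j hj
      obtain ⟨y, hy⟩ := hex j hj
      refine Finset.card_lt_card ⟨hmono j, fun hsub => ?_⟩
      have hyal : aliveAt H j y := by
        obtain ⟨s, hs⟩ := hy.1
        exact (stg_red.mp hs).2
      have : y ∈ A j := by simp [hA, hyal]
      have := hsub this
      simp only [hA, Finset.mem_filter, Finset.mem_univ, true_and] at this
      exact (aliveAt_succ.mp this).2 hy
    have hdesc : ∀ j ≤ N, (A j).card + j ≤ N := by
      intro j hj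
      induction j with
      | zero => simpa [hN] using Finset.card_le_univ (A 0)
      | succ j ih =>
        have h1 := hstrict j (by omega)
        have h2 := ih (by omega)
        omega
    have hN0 := hdesc N le_rfl
    have : x ∈ A N := by simp [hA, hxal]
    have := Finset.card_pos.mpr ⟨x, this⟩
    omega

end PRaux

namespace PRaux
open RBGraph Sum

variable {S C : Type} [Fintype C]

lemma partialRed_zero (M : C → S → Prop) (l : List C) :
    partialRed M l 0 = ofMatrix M := rfl

lemma partialRed_succ (M : C → S → Prop) (l : List C) {k : ℕ} (h : k < l.length) :
    partialRed M l (k+1) = realize (partialRed M l k) (l[k]'h) := by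
  unfold partialRed realizeSeq
  rw [List.take_succ, List.getElem?_eq_getElem h, List.foldl_append]
  rfl

lemma partialRed_stall (M : C → S → Prop) (l : List C) {k : ℕ} (h : l.length ≤ k) :
    partialRed M l (k+1) = partialRed M l k := by
  unfold partialRed
  rw [List.take_of_length_le h, List.take_of_length_le (by omega)]

lemma take_stall (l : List C) {k : ℕ} (h : l.length ≤ k) :
    l.take (k+1) = l.take k := by
  rw [List.take_of_length_le h, List.take_of_length_le (by omega)]

lemma getElem_mem_take (l : List C) {k : ℕ} (h : k < l.length) :
    l[k]'h ∈ l.take (k+1) := by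
  rw [List.take_succ, List.getElem?_eq_getElem h]
  exact List.mem_append_right _ (by simp)

lemma not_mem_take_self {l : List C} (hnd : l.Nodup) {k : ℕ} (h : k < l.length) :
    l[k]'h ∉ l.take k := by
  intro hmem
  rw [List.mem_iff_getElem] at hmem
  obtain ⟨i, hi, heq⟩ := hmem
  rw [List.length_take] at hi
  rw [List.getElem_take] at heq
  have : i = k := (List.Nodup.getElem_inj_iff hnd).mp heq
  omega

lemma mem_take_mono {l : List C} {i j : ℕ} (hij : i ≤ j) {x : C}
    (h : x ∈ l.take i) : x ∈ l.take j := by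
  have : l.take i = (l.take j).take i := by rw [List.take_take, min_eq_left hij]
  rw [this] at h
  exact (List.take_prefix i (l.take j)).subset h

lemma mem_take_succ_iff {l : List C} {k : ℕ} (h : k < l.length) {x : C} :
    x ∈ l.take (k+1) ↔ x ∈ l.take k ∨ x = l[k]'h := by
  rw [List.take_succ, List.getElem?_eq_getElem h, List.mem_append]
  simp

/-- Unrealized characters: black edges equal the matrix, no red edges. -/
lemma unrealized_spec (M : C → S → Prop) (l : List C) (k : ℕ) (x : C)
    (hx : x ∉ l.take k) :
    (∀ s, (partialRed M l k).black x s ↔ M x s) ∧ (∀ s, ¬ (partialRed M l k).red x s) := by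
  induction k with
  | zero => exact ⟨fun s => Iff.rfl, fun s h => h⟩
  | succ k ih =>
    by_cases hk : k < l.length
    · have hx' : x ∉ l.take k ∧ x ≠ l[k]'hk := by
        constructor
        · exact fun h => hx (mem_take_mono (by omega) h)
        · rintro rfl; exact hx (getElem_mem_take l hk)
      obtain ⟨ihb, ihr⟩ := ih hx'.1
      rw [partialRed_succ M l hk]
      set G := partialRed M l k
      set c := l[k]'hk
      set H : RBGraph S C := ⟨fun c' s => G.black c' s ∧ c' ≠ c,
        fun c' s => G.red c' s ∨ (c' = c ∧ ¬ G.black c s ∧ G.sameComp c s)⟩ with hH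
      have hHred : ∀ s, ¬ H.red x s := by
        rintro s (h | ⟨rfl, -⟩)
        · exact ihr s h
        · exact hx'.2 rfl
      have hal : ∀ j, aliveAt H j x := fun j => inactive_aliveAt (fun ⟨s, hs⟩ => hHred s hs) j
      constructor
      · intro s
        show (stg H (Fintype.card C)).black x s ↔ M x s
        rw [stg_black]
        constructor
        · rintro ⟨⟨h, -⟩, -⟩; exact (ihb s).mp h
        · intro h; exact ⟨⟨(ihb s).mpr h, hx'.2⟩, hal _⟩
      · intro s
        show ¬ (stg H (Fintype.card C)).red x s
        rw [stg_red]
        rintro ⟨h, -⟩; exact hHred s h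
    · rw [partialRed_stall M l (by omega)]
      rw [take_stall l (by omega)] at hx
      exact ih hx

/-- Realized characters have no black edges. -/
lemma realized_no_black (M : C → S → Prop) (l : List C) (k : ℕ) (x : C)
    (hx : x ∈ l.take k) (s : S) : ¬ (partialRed M l k).black x s := by
  induction k with
  | zero => simp at hx
  | succ k ih =>
    by_cases hk : k < l.length
    · rw [partialRed_succ M l hk]
      set G := partialRed M l k
      set c := l[k]'hk
      show ¬ (stg (⟨fun c' s => G.black c' s ∧ c' ≠ c, _⟩ : RBGraph S C) (Fintype.card C)).black x s
      rw [stg_black]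
      rintro ⟨⟨hb, hne⟩, -⟩
      rcases (mem_take_succ_iff hk).mp hx with h | rfl
      · exact ih h hb
      · exact hne rfl
    · rw [partialRed_stall M l (by omega)]
      rw [take_stall l (by omega)] at hx
      exact ih hx

/-- The red set of an active character equals its realization red set. -/
lemma active_red_spec (M : C → S → Prop) {l : List C} (hnd : l.Nodup) (k : ℕ) (x : C)
    (hx : (partialRed M l k).active x) :
    ∃ t, ∃ ht : t < l.length, t < k ∧ l[t]'ht = x ∧
      ∀ s, (partialRed M l k).red x s ↔
        (¬ M x s ∧ (partialRed M l t).sameComp x s) := by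
  induction k with
  | zero => exact (hx.choose_spec : False).elim
  | succ k ih =>
    by_cases hk : k < l.length
    · rw [partialRed_succ M l hk] at hx ⊢
      set G := partialRed M l k with hG
      set c := l[k]'hk with hc
      set H : RBGraph S C := ⟨fun c' s => G.black c' s ∧ c' ≠ c,
        fun c' s => G.red c' s ∨ (c' = c ∧ ¬ G.black c s ∧ G.sameComp c s)⟩ with hH
      obtain ⟨s0, hs0⟩ := hx
      have hs0' : H.red x s0 ∧ aliveAt H (Fintype.card C) x := stg_red.mp hs0
      have halx := hs0'.2
      have hredF : ∀ s, (realize G c).red x s ↔ H.red x s := by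
        intro s
        show (stg H (Fintype.card C)).red x s ↔ _
        rw [stg_red]
        exact ⟨fun h => h.1, fun h => ⟨h, halx⟩⟩
      by_cases hxc : x = c
      · refine ⟨k, hk, by omega, by rw [hxc, hc], ?_⟩
        intro s
        rw [hxc] at hredF ⊢
        rw [hredF s]
        have hun : c ∉ l.take k := by rw [hc]; exact not_mem_take_self hnd hk
        obtain ⟨hub, hur⟩ := unrealized_spec M l k c hun
        show G.red c s ∨ (c = c ∧ ¬ G.black c s ∧ G.sameComp c s) ↔ _
        constructor
        · rintro (h | ⟨-, hb, hcomp⟩)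
          · exact absurd h (hur s)
          · exact ⟨fun hm => hb ((hub s).mpr hm), hcomp⟩
        · rintro ⟨hm, hcomp⟩
          exact Or.inr ⟨rfl, fun hb => hm ((hub s).mp hb), hcomp⟩
      · have hGred : G.active x := by
          rcases hs0'.1 with h | ⟨h, -⟩
          · exact ⟨s0, h⟩
          · exact absurd h hxc
        obtain ⟨t, ht, htk, hteq, hts⟩ := ih hGred
        refine ⟨t, ht, by omega, hteq, ?_⟩
        intro s
        rw [hredF s, ← hts s]
        show G.red x s ∨ (x = c ∧ _) ↔ _
        constructor
        · rintro (h | ⟨h, -⟩)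
          · exact h
          · exact absurd h hxc
        · exact Or.inl
    · rw [partialRed_stall M l (by omega)] at hx ⊢
      obtain ⟨t, ht, htk, h⟩ := ih hx
      exact ⟨t, ht, by omega, h⟩

end PRaux

namespace PRaux
open RBGraph Sum
set_option linter.unusedSectionVars false

variable {S C : Type} [Fintype C]

/-- Death witness: a realized character that is inactive either was stillborn
(no red edges created at realization) or was red-universal in some intermediate
graph carrying its realization reds, while unrealized characters kept their
matrix black edges. -/
lemma death (M : C → S → Prop) {l : List C} (hnd : l.Nodup) :
    ∀ (k : ℕ) (x : C), x ∈ l.take k → ¬ (partialRed M l k).active x →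
    ∃ t, ∃ ht : t < l.length, t < k ∧ l[t]'ht = x ∧
      ((∀ s, ¬ M x s → ¬ (partialRed M l t).sameComp x s) ∨
       ∃ G' : RBGraph S C, G'.redUniversal x ∧
         (∀ s, G'.red x s ↔ (¬ M x s ∧ (partialRed M l t).sameComp x s)) ∧
         (∀ y, y ∉ l.take k → (∀ s, G'.black y s ↔ M y s) ∧ (∀ s, ¬ G'.red y s))) := by
  intro k
  induction k with
  | zero => intro x hx; simp at hx
  | succ k ih =>
    intro x hx hnact
    by_cases hk : k < l.length
    · rw [partialRed_succ M l hk] at hnact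
      set G := partialRed M l k with hG
      set c := l[k]'hk with hc
      set H : RBGraph S C := ⟨fun c' s => G.black c' s ∧ c' ≠ c,
        fun c' s => G.red c' s ∨ (c' = c ∧ ¬ G.black c s ∧ G.sameComp c s)⟩ with hH
      have hcnotk : c ∉ l.take k := by rw [hc]; exact not_mem_take_self hnd hk
      have hycond : ∀ j, ∀ y, y ∉ l.take (k+1) →
          (∀ s, (stg H j).black y s ↔ M y s) ∧ (∀ s, ¬ (stg H j).red y s) := by
        intro j y hy
        have hyk : y ∉ l.take k := fun h => hy (mem_take_mono (by omega) h)
        have hyc : y ≠ c := by rintro rfl; exact hy (by rw [hc]; exact getElem_mem_take l hk)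
        obtain ⟨hub, hur⟩ := unrealized_spec M l k y hyk
        have hHr : ∀ s, ¬ H.red y s := by
          rintro s (h | ⟨rfl, -⟩)
          · exact hur s h
          · exact hyc rfl
        have hal : ∀ j', aliveAt H j' y := fun j' => inactive_aliveAt (fun ⟨s, hs⟩ => hHr s hs) j'
        constructor
        · intro s
          rw [stg_black]
          exact ⟨fun h => (hub s).mp h.1.1, fun h => ⟨⟨(hub s).mpr h, hyc⟩, hal j⟩⟩
        · intro s h
          exact hHr s (stg_red.mp h).1
      rcases Classical.em (x ∈ l.take k) with hxk | hxnk
      · have hxc : x ≠ c := by rintro rfl; exact hcnotk hxk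
        by_cases hact : G.active x
        · -- x dies during realization of c
          obtain ⟨t, ht, htk, hteq, hred⟩ := active_red_spec M hnd k x hact
          have hnal : ¬ aliveAt H (Fintype.card C) x := by
            intro hal
            obtain ⟨s0, hs0⟩ := hact
            exact hnact ⟨s0, stg_red.mpr ⟨Or.inl hs0, hal⟩⟩
          obtain ⟨j, hjN, huniv, halj⟩ := dying hnal
          refine ⟨t, ht, by omega, hteq, Or.inr ⟨stg H j, huniv, ?_, fun y hy => hycond j y hy⟩⟩
          intro s
          rw [stg_red, ← hred s]
          constructor
          · rintro ⟨h | ⟨h, -⟩, -⟩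
            · exact h
            · exact absurd h hxc
          · exact fun h => ⟨Or.inl h, halj⟩
        · obtain ⟨t, ht, htk, hteq, hwit⟩ := ih x hxk hact
          refine ⟨t, ht, by omega, hteq, ?_⟩
          rcases hwit with h | ⟨G', h1, h2, h3⟩
          · exact Or.inl h
          · exact Or.inr ⟨G', h1, h2, fun y hy =>
              h3 y (fun h => hy (mem_take_mono (by omega) h))⟩
      · have hxc : x = c := by
          rcases (mem_take_succ_iff hk).mp hx with h | h
          · exact absurd h hxnk
          · rw [h, hc]
        obtain ⟨hub, hur⟩ := unrealized_spec M l k c hcnotk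
        have hHredc : ∀ s, H.red c s ↔ (¬ M c s ∧ G.sameComp c s) := by
          intro s
          constructor
          · rintro (h | ⟨-, hb, hcp⟩)
            · exact absurd h (hur s)
            · exact ⟨fun hm => hb ((hub s).mpr hm), hcp⟩
          · rintro ⟨hm, hcp⟩
            exact Or.inr ⟨rfl, fun hb => hm ((hub s).mp hb), hcp⟩
        subst hxc
        by_cases hHact : H.active c
        · have hnal : ¬ aliveAt H (Fintype.card C) c := by
            intro hal
            obtain ⟨s0, hs0⟩ := hHact
            exact hnact ⟨s0, stg_red.mpr ⟨hs0, hal⟩⟩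
          obtain ⟨j, hjN, huniv, halj⟩ := dying hnal
          refine ⟨k, hk, by omega, hc.symm, Or.inr ⟨stg H j, huniv, ?_, fun y hy => hycond j y hy⟩⟩
          intro s
          rw [stg_red, ← hHredc s]
          exact ⟨fun h => h.1, fun h => ⟨h, halj⟩⟩
        · refine ⟨k, hk, by omega, hc.symm, Or.inl ?_⟩
          intro s hm hcp
          exact hHact ⟨s, (hHredc s).mpr ⟨hm, hcp⟩⟩
    · rw [partialRed_stall M l (by omega)] at hnact
      rw [take_stall l (by omega)] at hx
      obtain ⟨t, ht, htk, hteq, hwit⟩ := ih x hx hnact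
      refine ⟨t, ht, by omega, hteq, ?_⟩
      rcases hwit with h | ⟨G', h1, h2, h3⟩
      · exact Or.inl h
      · exact Or.inr ⟨G', h1, h2, fun y hy => h3 y (by rwa [take_stall l (by omega)] at hy)⟩

end PRaux

namespace PRaux
open RBGraph Sum
set_option linter.unusedSectionVars false
set_option maxHeartbeats 1000000

variable {S C : Type} [Fintype C]

lemma maximal_diff {M : C → S → Prop} (hmax : MaximalM M) {x y : C} (hne : x ≠ y) :
    ∃ s, M x s ∧ ¬ M y s := by
  have := hmax x y hne
  push_neg at this
  exact this

lemma main_sc (M : C → S → Prop) (hmax : MaximalM M)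
    (hconn : (ofMatrix M).toSimple.Connected) {l : List C} (hl : isReduction M l) :
    ∀ k, k < l.length →
      (partialRed M l k).singleComponent ∧ (1 ≤ k → ∃ a, (partialRed M l k).active a) := by
  obtain ⟨hnd, hcompl, hedgeless, hσ⟩ := hl
  intro k
  induction k using Nat.strong_induction_on with
  | _ k IH =>
    match k with
    | 0 =>
      intro _
      refine ⟨?_, by omega⟩
      intro x y _ _
      exact hconn.preconnected x y
    | k + 1 =>
      intro hk1
      have hk : k < l.length := by omega
      have hSC : ∀ i, i ≤ k → (partialRed M l i).singleComponent := by
        intro i hi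
        exact (IH i (by omega) (by omega)).1
      set G := partialRed M l k with hG
      set c := l[k]'hk with hc
      set z := l[k+1]'hk1 with hz
      set H : RBGraph S C := ⟨fun c' s => G.black c' s ∧ c' ≠ c,
        fun c' s => G.red c' s ∨ (c' = c ∧ ¬ G.black c s ∧ G.sameComp c s)⟩ with hH
      have hrealizeF : partialRed M l (k+1) = realize G c := partialRed_succ M l hk
      have hFstg : realize G c = stg H (Fintype.card C) := rfl
      have hcnotk : c ∉ l.take k := by rw [hc]; exact not_mem_take_self hnd hk
      have hcmem : c ∈ l.take (k+1) := by rw [hc]; exact getElem_mem_take l hk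
      have hznot : z ∉ l.take (k+1) := by rw [hz]; exact not_mem_take_self hnd hk1
      -- nonemptiness of neighbourhoods
      have hNne : ∀ x : C, ∃ s, M x s := by
        intro x
        have h01 : l[0]'(by omega) ≠ l[1]'(by omega) := by
          intro h
          have := (List.Nodup.getElem_inj_iff hnd).mp h
          omega
        by_cases hx0 : x = l[0]'(by omega)
        · obtain ⟨s, hs, -⟩ := maximal_diff hmax (show x ≠ l[1]'(by omega) by rw [hx0]; exact h01)
          exact ⟨s, hs⟩
        · obtain ⟨s, hs, -⟩ := maximal_diff hmax hx0
          exact ⟨s, hs⟩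
      -- black edges of unrealized characters in G
      have hGblack : ∀ y, y ∉ l.take k → ∀ s, M y s → G.black y s := by
        intro y hy s hs
        exact ((unrealized_spec M l k y hy).1 s).mpr hs
      have hGnored : ∀ y, y ∉ l.take k → ∀ s, ¬ G.red y s :=
        fun y hy => (unrealized_spec M l k y hy).2
      have hGnoblack : ∀ y ∈ l.take k, ∀ s, ¬ G.black y s :=
        fun y hy s => realized_no_black M l k y hy s
      -- H-red of c
      have hHredc : ∀ s, H.red c s ↔ (¬ M c s ∧ G.sameComp c s) := by
        intro s
        constructor
        · rintro (h | ⟨-, hb, hcp⟩)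
          · exact absurd h (hGnored c hcnotk s)
          · exact ⟨fun hm => hb (hGblack c hcnotk s hm), hcp⟩
        · rintro ⟨hm, hcp⟩
          exact Or.inr ⟨rfl, fun hb => hm (((unrealized_spec M l k c hcnotk).1 s).mp hb), hcp⟩
      have hcnonisoG : G.nonIsolated (inr c) := by
        obtain ⟨s0, hs0⟩ := hNne c
        exact ⟨s0, Or.inl (hGblack c hcnotk s0 hs0)⟩
      have hHcred : ∀ u, G.nonIsolated (inl u) → ¬ M c u → H.red c u := by
        intro u hu hnm
        exact (hHredc u).mpr ⟨hnm, hSC k le_rfl _ _ hcnonisoG hu⟩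
      -- H is inactive on unrealized (≠ c) characters, whose blacks are the matrix
      have hHinact : ∀ y, y ∉ l.take (k+1) → ∀ j, aliveAt H j y := by
        intro y hy
        have hyk : y ∉ l.take k := fun h => hy (mem_take_mono (by omega) h)
        have hyc : y ≠ c := by rintro rfl; exact hy hcmem
        refine fun j => inactive_aliveAt ?_ j
        rintro ⟨s, h | ⟨rfl, -⟩⟩
        · exact hGnored y hyk s h
        · exact hyc rfl
      have hstgblacky : ∀ j, ∀ y, y ∉ l.take (k+1) → ∀ s, M y s → (stg H j).black y s := by
        intro j y hy s hs
        have hyk : y ∉ l.take k := fun h => hy (mem_take_mono (by omega) h)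
        have hyc : y ≠ c := by rintro rfl; exact hy hcmem
        exact stg_black.mpr ⟨⟨hGblack y hyk s hs, hyc⟩, hHinact y hy j⟩
      -- ===== the fresh character is never pruned =====
      have hcsafe : ∀ j, aliveAt H j c := by
        intro j
        induction j with
        | zero => exact aliveAt_zero H c
        | succ j ihj =>
          refine aliveAt_succ.mpr ⟨ihj, ?_⟩
          intro huniv
          -- the kill function from universality
          have hkill : ∀ s, (stg H j).toSimple.Reachable (inr c) (inl s) → ¬ M c s := by
            intro s hreach
            have := huniv.2 s hreach
            exact ((hHredc s).mp (stg_red.mp this).1).1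
          have hstgredc : ∀ j', j' ≤ j → ∀ u, G.nonIsolated (inl u) → ¬ M c u →
              (stg H j').red c u := by
            intro j' hj' u hu hnm
            exact stg_red.mpr ⟨hHcred u hu hnm, aliveAt_mono hj' ihj⟩
          -- (1) unrealized neighbourhoods are disjoint from N(c)
          have hdisj : ∀ z', z' ∉ l.take (k+1) → ∀ s, M z' s → ¬ M c s := by
            intro z' hz' s hs hcs
            have hz'k : z' ∉ l.take k := fun h => hz' (mem_take_mono (by omega) h)
            have hz'c : z' ≠ c := by rintro rfl; exact hz' hcmem
            obtain ⟨s'', hs''1, hs''2⟩ := maximal_diff hmax hz'c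
            have hno : G.nonIsolated (inl s'') := ⟨z', Or.inl (hGblack z' hz'k s'' hs''1)⟩
            have e1 : (stg H j).toSimple.Adj (inr c) (inl s'') :=
              adj_cs (Or.inr (hstgredc j le_rfl s'' hno hs''2))
            have e2 : (stg H j).toSimple.Adj (inl s'') (inr z') :=
              adj_sc (Or.inl (hstgblacky j z' hz' s'' hs''1))
            have e3 : (stg H j).toSimple.Adj (inr z') (inl s) :=
              adj_cs (Or.inl (hstgblacky j z' hz' s hs))
            exact hkill s (e1.reachable.trans (e2.reachable.trans e3.reachable)) hcs
          -- active characters red-cover all non-isolated species outside N(c)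
          have hactive_cover : ∀ e, G.active e → ∀ u, G.nonIsolated (inl u) → ¬ M c u →
              G.red e u := by
            intro e hact
            have herealized : e ∈ l.take k := by
              by_contra h
              obtain ⟨s0, hs0⟩ := hact
              exact hGnored e h s0 hs0
            have hec : e ≠ c := by rintro rfl; exact hcnotk herealized
            obtain ⟨te, hte, htek, hteq, hred⟩ := active_red_spec M hnd k e hact
            -- H2: N(y) ⊆ R(e) ∪ N(e) for unrealized y
            have henotte : e ∉ l.take te := by rw [← hteq]; exact not_mem_take_self hnd hte
            have hH2 : ∀ y, y ∉ l.take k → ∀ s, M y s → G.red e s ∨ M e s := by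
              intro y hy s hs
              by_cases hMe : M e s
              · exact Or.inr hMe
              · have hyte : y ∉ l.take te := fun h => hy (mem_take_mono (by omega) h)
                have hnos : (partialRed M l te).nonIsolated (inl s) :=
                  ⟨y, Or.inl (((unrealized_spec M l te y hyte).1 s).mpr hs)⟩
                have hnoe : (partialRed M l te).nonIsolated (inr e) := by
                  obtain ⟨s0, hs0⟩ := hNne e
                  exact ⟨s0, Or.inl (((unrealized_spec M l te e henotte).1 s0).mpr hs0)⟩
                exact Or.inl ((hred s).mpr ⟨hMe, hSC te (by omega) _ _ hnoe hnos⟩)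
            have hzk : z ∉ l.take k := fun h => hznot (mem_take_mono (by omega) h)
            have hze : z ≠ e := by rintro rfl; exact hzk herealized
            obtain ⟨ue, hue1, hue2⟩ := maximal_diff hmax hze
            have hredue : G.red e ue := (hH2 z hzk ue hue1).resolve_right hue2
            have hcue : ¬ M c ue := hdisj z hznot ue hue1
            have hnoue : G.nonIsolated (inl ue) := ⟨e, Or.inr hredue⟩
            obtain ⟨ts, hts1, hts2⟩ := maximal_diff hmax hec.symm
            have hredts : G.red e ts := (hH2 c hcnotk ts hts1).resolve_right hts2
            by_cases halive : aliveAt H j e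
            · -- impossible: c could not be universal
              exfalso
              have e1 : (stg H j).toSimple.Adj (inr c) (inl ue) :=
                adj_cs (Or.inr (hstgredc j le_rfl ue hnoue hcue))
              have e2 : (stg H j).toSimple.Adj (inl ue) (inr e) :=
                adj_sc (Or.inr (stg_red.mpr ⟨Or.inl hredue, halive⟩))
              have e3 : (stg H j).toSimple.Adj (inr e) (inl ts) :=
                adj_cs (Or.inr (stg_red.mpr ⟨Or.inl hredts, halive⟩))
              exact hkill ts (e1.reachable.trans (e2.reachable.trans e3.reachable)) hts1
            · -- e died earlier in this prune: its reds cover everything outside N(c)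
              obtain ⟨j', hj'j, hunivE, halj'E⟩ := dying halive
              intro u hu hnm
              have e1 : (stg H j').toSimple.Adj (inr e) (inl ue) :=
                adj_cs (Or.inr (stg_red.mpr ⟨Or.inl hredue, halj'E⟩))
              have e2 : (stg H j').toSimple.Adj (inl ue) (inr c) :=
                adj_sc (Or.inr (hstgredc j' (by omega) ue hnoue hcue))
              have e3 : (stg H j').toSimple.Adj (inr c) (inl u) :=
                adj_cs (Or.inr (hstgredc j' (by omega) u hu hnm))
              have hreach : (stg H j').toSimple.Reachable (inr e) (inl u) :=
                e1.reachable.trans (e2.reachable.trans e3.reachable)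
              have := hunivE.2 u hreach
              rcases (stg_red.mp this).1 with h | ⟨h, -⟩
              · exact h
              · exact absurd h hec
          -- killed: active characters cannot own species of unrealized characters
          have hactkill : ∀ e, G.active e → ∀ s, M e s → ∀ z', z' ∉ l.take (k+1) →
              ¬ M z' s := by
            intro e hact s hes z' hz' hz's
            have hz'k : z' ∉ l.take k := fun h => hz' (mem_take_mono (by omega) h)
            have hnos : G.nonIsolated (inl s) := ⟨z', Or.inl (hGblack z' hz'k s hz's)⟩
            have hcs : ¬ M c s := hdisj z' hz' s hz's
            have hredes : G.red e s := hactive_cover e hact s hnos hcs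
            obtain ⟨te, hte, htek, hteq, hred⟩ := active_red_spec M hnd k e hact
            exact ((hred s).mp hredes).1 hes
          -- dead characters cannot own species of unrealized characters either
          have hdeadkill : ∀ e, e ∈ l.take k → ¬ G.active e → ∀ s, M e s →
              ∀ z', z' ∉ l.take (k+1) → ¬ M z' s := by
            intro e hemem hnact s hes z' hz' hz's
            obtain ⟨te, hte, htek, hteq, hwit⟩ := death M hnd k e hemem hnact
            have hz'k : z' ∉ l.take k := fun h => hz' (mem_take_mono (by omega) h)
            have hz'te : z' ∉ l.take te := fun h => hz'k (mem_take_mono (by omega) h)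
            have hz'e : z' ≠ e := by rintro rfl; exact hz'k hemem
            have henotte : e ∉ l.take te := by rw [← hteq]; exact not_mem_take_self hnd hte
            obtain ⟨u, hu1, hu2⟩ := maximal_diff hmax hz'e
            -- u is in the component of e at time te
            have hnou : (partialRed M l te).nonIsolated (inl u) :=
              ⟨z', Or.inl (((unrealized_spec M l te z' hz'te).1 u).mpr hu1)⟩
            have hnoe : (partialRed M l te).nonIsolated (inr e) := by
              obtain ⟨s0, hs0⟩ := hNne e
              exact ⟨s0, Or.inl (((unrealized_spec M l te e henotte).1 s0).mpr hs0)⟩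
            have hcomp : (partialRed M l te).sameComp e u := hSC te (by omega) _ _ hnoe hnou
            rcases hwit with hstill | ⟨G', huniv', hred', hblack'⟩
            · exact hstill u hu2 hcomp
            · have hredeu : G'.red e u := (hred' u).mpr ⟨hu2, hcomp⟩
              have hbz' := hblack' z' hz'k
              have e1 : G'.toSimple.Adj (inr e) (inl u) := adj_cs (Or.inr hredeu)
              have e2 : G'.toSimple.Adj (inl u) (inr z') :=
                adj_sc (Or.inl ((hbz'.1 u).mpr hu1))
              have e3 : G'.toSimple.Adj (inr z') (inl s) :=
                adj_cs (Or.inl ((hbz'.1 s).mpr hz's))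
              have hreach : G'.toSimple.Reachable (inr e) (inl s) :=
                e1.reachable.trans (e2.reachable.trans e3.reachable)
              exact ((hred' s).mp (huniv'.2 s hreach)).1 hes
          -- ===== separation argument in the original graph =====
          set P : S ⊕ C → Prop := fun v =>
            match v with
            | inl s => ∃ z', z' ∉ l.take (k+1) ∧ M z' s
            | inr x => x ∉ l.take (k+1) with hP
          have hclosed : ∀ u v, (ofMatrix M).toSimple.Adj u v → P u → P v := by
            intro u v hadj hu
            rcases toSimple_adj_cases hadj with ⟨s, x, rfl, rfl, hxs⟩ | ⟨s, x, rfl, rfl, hxs⟩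
            · -- species to character
              have hMxs : M x s := by rcases hxs with h | h; exact h; exact h.elim
              obtain ⟨z', hz', hz's⟩ := hu
              show x ∉ l.take (k+1)
              intro hxmem
              rcases (mem_take_succ_iff hk).mp hxmem with hxk | hxc
              · by_cases hact : G.active x
                · exact hactkill x hact s hMxs z' hz' hz's
                · exact hdeadkill x hxk hact s hMxs z' hz' hz's
              · rw [← hc] at hxc
                subst hxc
                exact hdisj z' hz' s hz's hMxs
            · -- character to species
              have hMxs : M x s := by rcases hxs with h | h; exact h; exact h.elim
              exact ⟨x, hu, hMxs⟩
          have hPz : P (inr z) := hznot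
          have hPc := reach_ind P hclosed (hconn.preconnected (inr z) (inr c)) hPz
          exact hPc hcmem
      -- ===== c is active in the new graph =====
      have hcalive := hcsafe (Fintype.card C)
      have hFred : ∀ s, (realize G c).red c s ↔ H.red c s := by
        intro s
        show (stg H (Fintype.card C)).red c s ↔ _
        rw [stg_red]
        exact ⟨fun h => h.1, fun h => ⟨h, hcalive⟩⟩
      have hzc : z ≠ c := by intro h; exact hznot (by rw [h]; exact hcmem)
      have hcact : (realize G c).active c := by
        obtain ⟨s'', hs''1, hs''2⟩ := maximal_diff hmax hzc
        have hzk : z ∉ l.take k := fun h => hznot (mem_take_mono (by omega) h)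
        have hno : G.nonIsolated (inl s'') := ⟨z, Or.inl (hGblack z hzk s'' hs''1)⟩
        exact ⟨s'', (hFred s'').mpr (hHcred s'' hno hs''2)⟩
      -- ===== single component =====
      have hsingle : (realize G c).singleComponent := by
        classical
        have hstable : ∀ x, ¬ (realize G c).redUniversal x := by
          rw [hFstg, ← prune_eq_stg]; exact prune_stable H
        have hsig : ¬ redSigma (realize G c) := by
          have h := hσ (k+1) (by omega)
          rwa [show realizeSeq (ofMatrix M) (l.take (k+1)) = partialRed M l (k+1) from rfl,
            hrealizeF] at h
        have hFnoblack : ∀ y ∈ l.take (k+1), ∀ s, ¬ (realize G c).black y s := by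
          intro y hy s
          have := realized_no_black M l (k+1) y hy s
          rwa [hrealizeF] at this
        have hFun : ∀ y, y ∉ l.take (k+1) →
            (∀ s, ((realize G c).black y s ↔ M y s)) ∧ (∀ s, ¬ (realize G c).red y s) := by
          intro y hy
          have := unrealized_spec M l (k+1) y hy
          rwa [hrealizeF] at this
        -- every unrealized character reaches c
        have hzreach : ∀ y, y ∉ l.take (k+1) →
            (realize G c).toSimple.Reachable (inr y) (inr c) := by
          intro y hy
          have hyk : y ∉ l.take k := fun h => hy (mem_take_mono (by omega) h)
          have hyc : y ≠ c := by rintro rfl; exact hy hcmem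
          obtain ⟨s'', hs''1, hs''2⟩ := maximal_diff hmax hyc
          have hno : G.nonIsolated (inl s'') := ⟨y, Or.inl (hGblack y hyk s'' hs''1)⟩
          have e1 : (realize G c).toSimple.Adj (inr y) (inl s'') :=
            adj_cs (Or.inl (((hFun y hy).1 s'').mpr hs''1))
          have e2 : (realize G c).toSimple.Adj (inl s'') (inr c) :=
            adj_sc (Or.inr ((hFred s'').mpr (hHcred s'' hno hs''2)))
          exact e1.reachable.trans e2.reachable
        -- chain lemma from Σ-freeness
        have hchain : ∀ a b, (∀ s, ¬(realize G c).black a s) → (∀ s, ¬(realize G c).black b s) →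
            ∀ s2, (realize G c).red a s2 → (realize G c).red b s2 →
            ((∀ s, (realize G c).red a s → (realize G c).red b s) ∨
             (∀ s, (realize G c).red b s → (realize G c).red a s)) := by
          intro a b hba hbb s2 ha2 hb2
          by_contra hcon
          push_neg at hcon
          obtain ⟨⟨s1, h1a, h1b⟩, ⟨s3, h3b, h3a⟩⟩ := hcon
          refine hsig ⟨a, b, s1, s2, s3, ?_, ?_, ?_, ?_, h1a, ha2, hb2, h3b, ?_, ?_⟩
          · rintro rfl; exact h1b h1a
          · rintro rfl; exact h1b hb2
          · rintro rfl; exact h3a ha2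
          · rintro rfl; exact h3a h1a
          · rintro (h | h); exacts [hba s3 h, h3a h]
          · rintro (h | h); exacts [hbb s1 h, h1b h]
        -- every active character reaches c
        have hchar : ∀ x : C, (realize G c).active x →
            (realize G c).toSimple.Reachable (inr x) (inr c) := by
          intro x hxact
          by_contra hnr
          set A : Finset C := Finset.univ.filter
            (fun y => (realize G c).active y ∧
              (realize G c).toSimple.Reachable (inr y) (inr x)) with hA
          have hxA : x ∈ A := by
            rw [hA, Finset.mem_filter]
            exact ⟨Finset.mem_univ x, hxact, SimpleGraph.Reachable.refl _⟩
          have hAmem : ∀ y, y ∈ A → (realize G c).active y ∧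
              (realize G c).toSimple.Reachable (inr y) (inr x) := by
            intro y hy
            rw [hA, Finset.mem_filter] at hy
            exact hy.2
          have hAreal : ∀ y : C, (realize G c).toSimple.Reachable (inr y) (inr x) →
              y ∈ l.take (k+1) ∧ y ≠ c := by
            intro y hre
            have hyc : y ≠ c := by
              rintro rfl
              exact hnr hre.symm
            refine ⟨?_, hyc⟩
            by_contra hy
            exact hnr ((hre.symm).trans (hzreach y hy))
          have hAnoblack : ∀ y : C, (realize G c).toSimple.Reachable (inr y) (inr x) →
              ∀ s, ¬ (realize G c).black y s :=
            fun y hre => hFnoblack y (hAreal y hre).1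
          set T : Finset (Set S) := A.image (fun y => {s | (realize G c).red y s}) with hT
          have hTne : T.Nonempty := ⟨_, Finset.mem_image_of_mem _ hxA⟩
          obtain ⟨Rm, hRmT, hmaxel⟩ : ∃ m ∈ T, ∀ x ∈ T, ¬ m < x := by
            obtain ⟨m, hm⟩ := Finset.exists_maximal hTne
            exact ⟨m, hm.1, fun x hx hlt => hlt.not_ge (hm.2 hx hlt.le)⟩
          obtain ⟨astar, hastarA, hRm⟩ := Finset.mem_image.mp hRmT
          have hastar := hAmem astar hastarA
          -- walk induction predicate
          set P' : S ⊕ C → Prop := fun v =>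
            (realize G c).toSimple.Reachable (inr astar) v ∧
            (∀ s, v = inl s → (realize G c).red astar s) ∧
            (∀ y, v = inr y → ∀ s, (realize G c).red y s → (realize G c).red astar s) with hP'
          have hsub_of_mem : ∀ y ∈ A, ∀ s2, (realize G c).red astar s2 → (realize G c).red y s2 →
              ∀ s, (realize G c).red y s → (realize G c).red astar s := by
            intro y hyA s2 has2 hys2
            rcases hchain astar y (hAnoblack astar hastar.2) (hAnoblack y (hAmem y hyA).2)
              s2 has2 hys2 with hle | hle
            · have hyT : {s | (realize G c).red y s} ∈ T := Finset.mem_image_of_mem _ hyA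
              have hnotlt := hmaxel _ hyT
              have hle' : Rm ≤ {s | (realize G c).red y s} := by
                rw [← hRm]; exact fun s hs => hle s hs
              rcases eq_or_lt_of_le hle' with heq | hlt
              · intro s hs
                have : s ∈ Rm := heq ▸ hs
                rw [← hRm] at this
                exact this
              · exact absurd hlt hnotlt
            · exact hle
          have hstart : P' (inr astar) := by
            refine ⟨SimpleGraph.Reachable.refl _, ?_, ?_⟩
            · intro s h; cases h
            · intro y h s hs
              have : y = astar := by injection h.symm
              rwa [this] at hs
          have hclosed' : ∀ u v, (realize G c).toSimple.Adj u v → P' u → P' v := by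
            intro u v hadj hu
            obtain ⟨hre, hsp, hch⟩ := hu
            have hrev : (realize G c).toSimple.Reachable (inr astar) v :=
              hre.trans hadj.reachable
            rcases toSimple_adj_cases hadj with ⟨s, y, hueq, hveq, hyadj⟩ |
              ⟨s, y, hueq, hveq, hyadj⟩
            · -- u = inl s, v = inr y
              subst hueq; subst hveq
              have hreachyx : (realize G c).toSimple.Reachable (inr y) (inr x) :=
                hrev.symm.trans hastar.2
              have hnbly : ∀ s', ¬ (realize G c).black y s' := hAnoblack y hreachyx
              have hreds : (realize G c).red y s := by
                rcases hyadj with h | h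
                · exact absurd h (hnbly s)
                · exact h
              have hsas : (realize G c).red astar s := hsp s rfl
              have hyA : y ∈ A := by
                rw [hA, Finset.mem_filter]
                exact ⟨Finset.mem_univ y, ⟨s, hreds⟩, hreachyx⟩
              refine ⟨hrev, ?_, ?_⟩
              · intro s' h; cases h
              · intro y' h s' hs'
                have hyy : y' = y := by injection h.symm
                rw [hyy] at hs'
                exact hsub_of_mem y hyA s hsas hreds s' hs'
            · -- u = inr y, v = inl s
              subst hueq; subst hveq
              have hreachyx : (realize G c).toSimple.Reachable (inr y) (inr x) :=
                hre.symm.trans hastar.2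
              have hnbly : ∀ s', ¬ (realize G c).black y s' := hAnoblack y hreachyx
              have hreds : (realize G c).red y s := by
                rcases hyadj with h | h
                · exact absurd h (hnbly s)
                · exact h
              have hsas : (realize G c).red astar s := hch y rfl s hreds
              refine ⟨hrev, ?_, ?_⟩
              · intro s' h
                have hss : s' = s := by injection h.symm
                rwa [hss]
              · intro y' h; cases h
          -- a* is red-universal: contradiction with stability
          refine hstable astar ⟨hastar.1, ?_⟩
          intro s hs
          exact (reach_ind P' hclosed' hs hstart).2.1 s rfl
        -- assembling the single component
        have hcharreach : ∀ y : C, (realize G c).nonIsolated (inr y) →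
            (realize G c).toSimple.Reachable (inr y) (inr c) := by
          intro y hy
          by_cases hymem : y ∈ l.take (k+1)
          · by_cases hyc : y = c
            · rw [hyc]
            · obtain ⟨s, hs⟩ := hy
              rcases hs with h | h
              · exact absurd h (hFnoblack y hymem s)
              · exact hchar y ⟨s, h⟩
          · exact hzreach y hymem
        have hreachtoc : ∀ v, (realize G c).nonIsolated v →
            (realize G c).toSimple.Reachable v (inr c) := by
          intro v hv
          match v with
          | inr y => exact hcharreach y hv
          | inl s =>
            obtain ⟨y, hy⟩ := hv
            have e1 : (realize G c).toSimple.Adj (inl s) (inr y) := adj_sc hy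
            have hynon : (realize G c).nonIsolated (inr y) := ⟨s, hy⟩
            exact e1.reachable.trans (hcharreach y hynon)
        intro v w hv hw
        exact (hreachtoc v hv).trans (hreachtoc w hw).symm
      rw [hrealizeF]
      exact ⟨hsingle, fun _ => ⟨c, hcact⟩⟩

end PRaux


/-- partial reductions of a maximal connected reducible graph are
connected and contain an active character. -/
theorem partial_reductions_connected {S C : Type} [Fintype C] (M : C → S → Prop)
    (hmax : RBGraph.MaximalM M) (hconn : (RBGraph.ofMatrix M).toSimple.Connected)
    (l : List C) (hl : RBGraph.isReduction M l) (k : ℕ) (h1 : 1 ≤ k) (h2 : k < l.length) :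
    (RBGraph.partialRed M l k).singleComponent ∧
    ∃ c, (RBGraph.partialRed M l k).active c := by
  obtain ⟨h1', h2'⟩ := PRaux.main_sc M hmax hconn hl k h2
  exact ⟨h1', h2' h1⟩
end

section
/- In any partial reduction G_RB^k of a maximal connected graph, every inactive character has at least one neighbor in the red neighborhood of each active character. -/
open Classical

section Aux

set_option linter.unusedSectionVars false

open RBGraph

variable {S C : Type} [Fintype C]

/-- The intermediate graph in the definition of `realize`, before pruning. -/
def RB5.inner (G : RBGraph S C) (c : C) : RBGraph S C :=
  ⟨fun c' s => G.black c' s ∧ c' ≠ c,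
   fun c' s => G.red c' s ∨ (c' = c ∧ ¬ G.black c s ∧ G.sameComp c s)⟩

lemma RB5.realize_eq (G : RBGraph S C) (c : C) :
    G.realize c = pruneStep^[Fintype.card C] (RB5.inner G c) := rfl

lemma RB5.adj_cs {G : RBGraph S C} {c : C} {s : S} (h : G.adj c s) :
    G.toSimple.Adj (Sum.inr c) (Sum.inl s) := Or.inr ⟨s, c, rfl, rfl, h⟩

lemma RB5.adj_sc {G : RBGraph S C} {c : C} {s : S} (h : G.adj c s) :
    G.toSimple.Adj (Sum.inl s) (Sum.inr c) := Or.inl ⟨s, c, rfl, rfl, h⟩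

lemma RB5.reach_closed {V : Type} {Gr : SimpleGraph V} {P : V → Prop}
    (hP : ∀ x y, P x → Gr.Adj x y → P y) {x y : V}
    (h : Gr.Reachable x y) (hx : P x) : P y := by
  obtain ⟨w⟩ := h
  induction w with
  | nil => exact hx
  | cons a _ ih => exact ih (hP _ _ hx a)

lemma RB5.reach_ne_adj {V : Type} {Gr : SimpleGraph V} {x y : V}
    (h : Gr.Reachable x y) (hne : x ≠ y) : ∃ z, Gr.Adj x z := by
  obtain ⟨w⟩ := h
  cases w with
  | nil => exact absurd rfl hne
  | cons a _ => exact ⟨_, a⟩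

lemma RB5.iter_red_le (H : RBGraph S C) (h : C) :
    ∀ n s, (pruneStep^[n] H).red h s → H.red h s := by
  intro n
  induction n with
  | zero => simp
  | succ n ih =>
    intro s hs
    rw [Function.iterate_succ_apply'] at hs
    exact ih s hs.1

lemma RB5.iter_black_le (H : RBGraph S C) (h : C) :
    ∀ n s, (pruneStep^[n] H).black h s → H.black h s := by
  intro n
  induction n with
  | zero => simp
  | succ n ih =>
    intro s hs
    rw [Function.iterate_succ_apply'] at hs
    exact ih s hs.1

/-- A character with no red edges keeps its black edges through pruning. -/
lemma RB5.inactive_stable (H : RBGraph S C) (e : C) (hno : ∀ s, ¬ H.red e s) :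
    ∀ n s, (¬ (pruneStep^[n] H).red e s) ∧ ((pruneStep^[n] H).black e s ↔ H.black e s) := by
  intro n
  induction n with
  | zero => exact fun s => ⟨hno s, Iff.rfl⟩
  | succ n ih =>
    intro s
    rw [Function.iterate_succ_apply']
    have hnru : ¬ (pruneStep^[n] H).redUniversal e := by
      rintro ⟨⟨s', hs'⟩, -⟩
      exact (ih s').1 hs'
    constructor
    · rintro ⟨hr, -⟩
      exact (ih s).1 hr
    · constructor
      · rintro ⟨hb, -⟩
        exact (ih s).2.mp hb
      · intro hb
        exact ⟨(ih s).2.mpr hb, hnru⟩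

/-- All-or-nothing: after `n` pruning steps a character either has exactly its
original edges, or none. -/
lemma RB5.prune_aon (H : RBGraph S C) (h : C) :
    ∀ n, (∀ s, ((pruneStep^[n] H).black h s ↔ H.black h s) ∧
              ((pruneStep^[n] H).red h s ↔ H.red h s)) ∨
         (∀ s, ¬ (pruneStep^[n] H).black h s ∧ ¬ (pruneStep^[n] H).red h s) := by
  intro n
  induction n with
  | zero => left; simp
  | succ n ih =>
    rcases ih with hL | hR
    · by_cases hru : (pruneStep^[n] H).redUniversal h
      · right
        intro s
        rw [Function.iterate_succ_apply']
        exact ⟨fun hb => hb.2 hru, fun hr => hr.2 hru⟩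
      · left
        intro s
        rw [Function.iterate_succ_apply']
        refine ⟨⟨fun hb => (hL s).1.mp hb.1, fun hb => ⟨(hL s).1.mpr hb, hru⟩⟩,
                ⟨fun hr => (hL s).2.mp hr.1, fun hr => ⟨(hL s).2.mpr hr, hru⟩⟩⟩
    · right
      intro s
      rw [Function.iterate_succ_apply']
      exact ⟨fun hb => (hR s).1 hb.1, fun hr => (hR s).2 hr.1⟩

/-- Either a character keeps all its edges through pruning, or at some stage it
still has all its edges and is red-universal. -/
lemma RB5.prune_dichotomy (H : RBGraph S C) (h : C) :
    ∀ n, (∀ s, ((pruneStep^[n] H).black h s ↔ H.black h s) ∧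
              ((pruneStep^[n] H).red h s ↔ H.red h s)) ∨
         (∃ i, (∀ s, ((pruneStep^[i] H).black h s ↔ H.black h s) ∧
                    ((pruneStep^[i] H).red h s ↔ H.red h s)) ∧
               (pruneStep^[i] H).redUniversal h) := by
  intro n
  induction n with
  | zero => left; simp
  | succ n ih =>
    rcases ih with hL | hR
    · by_cases hru : (pruneStep^[n] H).redUniversal h
      · exact Or.inr ⟨n, hL, hru⟩
      · left
        intro s
        rw [Function.iterate_succ_apply']
        refine ⟨⟨fun hb => (hL s).1.mp hb.1, fun hb => ⟨(hL s).1.mpr hb, hru⟩⟩,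
                ⟨fun hr => (hL s).2.mp hr.1, fun hr => ⟨(hL s).2.mpr hr, hru⟩⟩⟩
    · exact Or.inr hR

variable (M : C → S → Prop)

/-- The graph after realizing the characters of `u` in order. -/
def RB5.Gs (u : List C) : RBGraph S C := realizeSeq (ofMatrix M) u

lemma RB5.Gs_concat (u : List C) (cp : C) :
    RB5.Gs M (u ++ [cp]) = (RB5.Gs M u).realize cp := by
  simp [RB5.Gs, realizeSeq, List.foldl_append]

/-- The basic structural invariant: unrealized characters have their original
black edges and no red edges; realized characters have no black edges; red
edges only join characters to species they do not possess. -/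
lemma RB5.pinv : ∀ (u : List C), u.Nodup →
    (∀ c, c ∉ u → ∀ s, ((RB5.Gs M u).black c s ↔ M c s) ∧ ¬ (RB5.Gs M u).red c s) ∧
    (∀ c, c ∈ u → ∀ s, ¬ (RB5.Gs M u).black c s) ∧
    (∀ c s, (RB5.Gs M u).red c s → ¬ M c s) := by
  intro u
  induction u using List.reverseRecOn with
  | nil =>
    intro _
    refine ⟨fun c _ s => ⟨Iff.rfl, fun hr => hr⟩, fun c hc => absurd hc List.not_mem_nil,
      fun c s hr => hr.elim⟩
  | append_singleton u cp ih =>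
    intro hnd
    have hu : u.Nodup := (List.sublist_append_left u [cp]).nodup hnd
    have hcp : cp ∉ u := by
      have := List.disjoint_of_nodup_append hnd
      intro hmem
      exact this hmem (List.mem_singleton_self cp)
    obtain ⟨h1, h2, h3⟩ := ih hu
    rw [RB5.Gs_concat, RB5.realize_eq]
    set H : RBGraph S C := RB5.inner (RB5.Gs M u) cp with hH
    have hHred : ∀ c s, H.red c s → ¬ M c s := by
      rintro c s (hr | ⟨heq, hnb, -⟩)
      · exact h3 c s hr
      · intro hM
        exact hnb (((h1 cp hcp s).1).mpr (heq ▸ hM))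
    refine ⟨?_, ?_, ?_⟩
    · intro c hc s
      have hc_u : c ∉ u := fun h' => hc (List.mem_append_left _ h')
      have hc_cp : c ≠ cp := fun h' => hc (by simp [h'])
      have hnored : ∀ s', ¬ H.red c s' := by
        rintro s' (hr | ⟨rfl, -⟩)
        · exact (h1 c hc_u s').2 hr
        · exact hc_cp rfl
      have hstab := RB5.inactive_stable H c hnored (Fintype.card C)
      refine ⟨?_, (hstab s).1⟩
      rw [(hstab s).2]
      show (RB5.Gs M u).black c s ∧ c ≠ cp ↔ M c s
      constructor
      · rintro ⟨hb, -⟩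
        exact (h1 c hc_u s).1.mp hb
      · intro hM
        exact ⟨(h1 c hc_u s).1.mpr hM, hc_cp⟩
    · intro c hc s hb
      have hb0 : H.black c s := RB5.iter_black_le H c _ s hb
      rcases List.mem_append.mp hc with hc' | hc'
      · exact h2 c hc' s hb0.1
      · exact hb0.2 (List.mem_singleton.mp hc')
    · intro c s hr
      exact hHred c s (RB5.iter_red_le H c _ s hr)

/-- Invariant J: every active character has a red edge into the species set of
every unrealized character (with nonempty species set). -/
def RB5.Jp (u : List C) : Prop :=
  ∀ h, (∃ s, (RB5.Gs M u).red h s) → ∀ e, e ∉ u → (∃ s, M e s) →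
    ∃ s, M e s ∧ (RB5.Gs M u).red h s

/-- Invariant K: unrealized characters with nonempty species sets are mutually
reachable. -/
def RB5.Kp (u : List C) : Prop :=
  ∀ e f, e ∉ u → (∃ s, M e s) → f ∉ u → (∃ s, M f s) →
    (RB5.Gs M u).toSimple.Reachable (Sum.inr e) (Sum.inr f)

/-- Core of the death argument: if a character `h` ends up edgeless after
realizing `cp`, but had a red "hook" edge to a species of the unrealized
character `e` before pruning, then `h`'s and `e`'s species sets are disjoint. -/
lemma RB5.die_core (G : RBGraph S C) (cp e h : C) (t₀ : S) (ht₀e : M e t₀)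
    (hhook : (RB5.inner G cp).red h t₀)
    (hblk : ∀ s, (RB5.inner G cp).black e s ↔ M e s)
    (hnored : ∀ s, ¬ (RB5.inner G cp).red e s)
    (hdead : ∀ s, ¬ (G.realize cp).red h s)
    (hredsub : ∀ s, (RB5.inner G cp).red h s → ¬ M h s) :
    ∀ s, M e s → ¬ M h s := by
  set H : RBGraph S C := RB5.inner G cp with hH
  rcases RB5.prune_dichotomy H h (Fintype.card C) with hL | ⟨i, heq, hru⟩
  · exfalso
    have : (G.realize cp).red h t₀ := by
      rw [RB5.realize_eq]
      exact (hL t₀).2.mpr hhook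
    exact hdead t₀ this
  · intro s hMs
    have h1 : (pruneStep^[i] H).red h t₀ := (heq t₀).2.mpr hhook
    have hstab := RB5.inactive_stable H e hnored i
    have hbe : ∀ s', M e s' → (pruneStep^[i] H).black e s' := fun s' hs' =>
      (hstab s').2.mpr ((hblk s').mpr hs')
    have hreach : (pruneStep^[i] H).toSimple.Reachable (Sum.inr h) (Sum.inl s) := by
      refine (RB5.adj_cs (Or.inr h1)).reachable.trans ?_
      refine (RB5.adj_sc (Or.inl (hbe t₀ ht₀e))).reachable.trans ?_
      exact (RB5.adj_cs (Or.inl (hbe s hMs))).reachable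
    have hred : (pruneStep^[i] H).red h s := hru.2 s hreach
    exact hredsub s ((heq s).2.mp hred)

/-- A realized character that is edgeless has species set disjoint from every
unrealized character's species set. -/
lemma RB5.dead_disjoint (hmax : MaximalM M) : ∀ (w : List C), w.Nodup →
    (∀ u', u'.length < w.length → u'.Nodup → RB5.Jp M u' ∧ RB5.Kp M u') →
    ∀ h, h ∈ w → (∀ s, ¬ (RB5.Gs M w).black h s) → (∀ s, ¬ (RB5.Gs M w).red h s) →
    ∀ e, e ∉ w → (∃ s, M e s) → ∀ s, M e s → ¬ M h s := by
  intro w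
  induction w using List.reverseRecOn with
  | nil =>
    intro _ _ h hh
    exact absurd hh List.not_mem_nil
  | append_singleton u cp ihw =>
    intro hnd hIH h hh hb hr e he hMe
    have hu : u.Nodup := (List.sublist_append_left u [cp]).nodup hnd
    have hcp : cp ∉ u := by
      have := List.disjoint_of_nodup_append hnd
      intro hmem; exact this hmem (List.mem_singleton_self cp)
    have he_u : e ∉ u := fun h' => he (List.mem_append_left _ h')
    have he_cp : e ≠ cp := fun h' => he (by simp [h'])
    obtain ⟨p1, p2, p3⟩ := RB5.pinv M u hu
    by_cases hMh : ∃ s, M h s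
    swap
    · intro s _ hMhs
      exact hMh ⟨s, hMhs⟩
    have hlenu : u.length < (u ++ [cp]).length := by simp
    obtain ⟨hJu, hKu⟩ := hIH u hlenu hu
    have hdead' : ∀ s, ¬ ((RB5.Gs M u).realize cp).red h s := by
      intro s
      rw [← RB5.Gs_concat]
      exact hr s
    rcases List.mem_append.mp hh with hh_u | hh_cp
    · -- h was realized earlier
      by_cases hact : ∃ s, (RB5.Gs M u).red h s
      · -- h was active before this step: hook from J
        obtain ⟨s₀, hMs₀, hred₀⟩ := hJu h hact e he_u hMe
        have h_ne_cp : h ≠ cp := fun h' => hcp (h' ▸ hh_u)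
        refine RB5.die_core M (RB5.Gs M u) cp e h s₀ hMs₀ (Or.inl hred₀) ?_ ?_ hdead' ?_
        · intro s
          show (RB5.Gs M u).black e s ∧ e ≠ cp ↔ M e s
          exact ⟨fun ⟨hb', _⟩ => (p1 e he_u s).1.mp hb', fun hM => ⟨(p1 e he_u s).1.mpr hM, he_cp⟩⟩
        · rintro s (hr' | ⟨rfl, -⟩)
          · exact (p1 e he_u s).2 hr'
          · exact he_cp rfl
        · rintro s (hr' | ⟨heq, -⟩)
          · exact p3 h s hr'
          · exact (h_ne_cp heq).elim
      · -- h was already edgeless before this step: recurse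
        push_neg at hact
        exact ihw hu (fun u' hl hn => hIH u' (lt_trans hl hlenu) hn) h hh_u
          (fun s => p2 h hh_u s) hact e he_u hMe
    · -- h = cp : h is the character realized at this step
      have hhcp : h = cp := List.mem_singleton.mp hh_cp
      subst hhcp
      -- hook via maximality and K
      have hKreach := hKu h e hcp hMh he_u hMe
      have hmx := hmax e h he_cp
      push_neg at hmx
      obtain ⟨t₀, hMet₀, hnMt₀⟩ := hmx
      have hbet₀ : (RB5.Gs M u).black e t₀ := (p1 e he_u t₀).1.mpr hMet₀
      have hsc : (RB5.Gs M u).sameComp h t₀ :=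
        hKreach.trans (RB5.adj_cs (Or.inl hbet₀)).reachable
      have hnb : ¬ (RB5.Gs M u).black h t₀ := fun hb' => hnMt₀ ((p1 h hcp t₀).1.mp hb')
      refine RB5.die_core M (RB5.Gs M u) h e h t₀ hMet₀ (Or.inr ⟨rfl, hnb, hsc⟩) ?_ ?_ hdead' ?_
      · intro s
        show (RB5.Gs M u).black e s ∧ e ≠ h ↔ M e s
        exact ⟨fun ⟨hb', _⟩ => (p1 e he_u s).1.mp hb', fun hM => ⟨(p1 e he_u s).1.mpr hM, he_cp⟩⟩
      · rintro s (hr' | ⟨hef, -⟩)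
        · exact (p1 e he_u s).2 hr'
        · exact he_cp hef
      · rintro s (hr' | ⟨-, hnb', -⟩)
        · exact (p1 h hcp s).2 hr' |>.elim
        · intro hM
          exact hnb' ((p1 h hcp s).1.mpr hM)

/-- The main mutual induction establishing `J` and `K` for all prefixes. -/
lemma RB5.mainJK (hmax : MaximalM M) (hconn : (ofMatrix M).toSimple.Connected) :
    ∀ n (t : List C), t.length ≤ n → t.Nodup →
    RB5.Jp M t ∧ RB5.Kp M t := by
  intro n
  induction n with
  | zero =>
    intro t ht _
    have : t = [] := List.eq_nil_of_length_eq_zero (Nat.le_zero.mp ht)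
    subst this
    constructor
    · rintro h ⟨s, hs⟩
      exact hs.elim
    · intro e f _ _ _ _
      exact hconn.preconnected (Sum.inr e) (Sum.inr f)
  | succ n ihn =>
    intro t htlen hnd
    by_cases hle : t.length ≤ n
    · exact ihn t hle hnd
    rcases List.eq_nil_or_concat t with rfl | ⟨u, cp, rfl⟩
    · exact absurd (Nat.zero_le n) (by simpa using hle)
    rw [List.concat_eq_append] at *
    have hu : u.Nodup := (List.sublist_append_left u [cp]).nodup hnd
    have hcp : cp ∉ u := by
      have := List.disjoint_of_nodup_append hnd
      intro hmem; exact this hmem (List.mem_singleton_self cp)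
    have hulen : u.length ≤ n := by
      have : u.length + 1 ≤ n + 1 := by simpa using htlen
      omega
    obtain ⟨hJu, hKu⟩ := ihn u hulen hu
    obtain ⟨p1, p2, p3⟩ := RB5.pinv M u hu
    obtain ⟨q1, q2, q3⟩ := RB5.pinv M (u ++ [cp]) hnd
    set H : RBGraph S C := RB5.inner (RB5.Gs M u) cp with hH
    have hGs : RB5.Gs M (u ++ [cp]) = pruneStep^[Fintype.card C] H := by
      rw [RB5.Gs_concat, RB5.realize_eq]
    have hJ : RB5.Jp M (u ++ [cp]) := by
      intro h hact e he hMe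
      have he_u : e ∉ u := fun h' => he (List.mem_append_left _ h')
      have he_cp : e ≠ cp := fun h' => he (by simp [h'])
      obtain ⟨s₁, hs₁⟩ := hact
      rw [hGs] at hs₁
      rcases RB5.prune_aon H h (Fintype.card C) with hL | hRt
      swap
      · exact absurd hs₁ (hRt s₁).2
      have hinner : H.red h s₁ := (hL s₁).2.mp hs₁
      by_cases hhcp : h = cp
      · subst hhcp
        have hsc₁ : (RB5.Gs M u).sameComp h s₁ := by
          rcases hinner with hr' | ⟨-, -, hsc⟩
          · exact absurd hr' ((p1 h hcp s₁).2)
          · exact hsc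
        -- M h is nonempty
        have hMh : ∃ s, M h s := by
          obtain ⟨z, hadj⟩ := RB5.reach_ne_adj hsc₁ (by simp)
          rcases hadj with ⟨s', c', hx, -, -⟩ | ⟨s', c', hx, -, hadj'⟩
          · exact absurd hx (by simp)
          · have hcc : c' = h := by simpa [eq_comm] using hx
            subst hcc
            rcases hadj' with hb' | hr'
            · exact ⟨s', (p1 c' hcp s').1.mp hb'⟩
            · exact absurd hr' ((p1 c' hcp s').2)
        have hmx := hmax e h he_cp
        push_neg at hmx
        obtain ⟨s₀, hMes₀, hns₀⟩ := hmx
        have hbe : (RB5.Gs M u).black e s₀ := (p1 e he_u s₀).1.mpr hMes₀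
        have hsc₀ : (RB5.Gs M u).sameComp h s₀ :=
          (hKu h e hcp hMh he_u hMe).trans (RB5.adj_cs (Or.inl hbe)).reachable
        have hnb : ¬ (RB5.Gs M u).black h s₀ := fun hb' => hns₀ ((p1 h hcp s₀).1.mp hb')
        refine ⟨s₀, hMes₀, ?_⟩
        rw [hGs]
        exact (hL s₀).2.mpr (Or.inr ⟨rfl, hnb, hsc₀⟩)
      · have hGu : (RB5.Gs M u).red h s₁ := by
          rcases hinner with hr' | ⟨h', -⟩
          · exact hr'
          · exact absurd h' hhcp
        obtain ⟨s, hMs, hred⟩ := hJu h ⟨s₁, hGu⟩ e he_u hMe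
        refine ⟨s, hMs, ?_⟩
        rw [hGs]
        exact (hL s).2.mpr (Or.inl hred)
    have hK : RB5.Kp M (u ++ [cp]) := by
      intro e f he hMe hf hMf
      by_cases hact : ∃ h s, (RB5.Gs M (u ++ [cp])).red h s
      · obtain ⟨h, hh⟩ := hact
        obtain ⟨se, hMse, hrede⟩ := hJ h hh e he hMe
        obtain ⟨sf, hMsf, hredf⟩ := hJ h hh f hf hMf
        have hbe : (RB5.Gs M (u ++ [cp])).black e se := (q1 e he se).1.mpr hMse
        have hbf : (RB5.Gs M (u ++ [cp])).black f sf := (q1 f hf sf).1.mpr hMsf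
        refine (RB5.adj_cs (Or.inl hbe)).reachable.trans ?_
        refine (RB5.adj_sc (Or.inr hrede)).reachable.trans ?_
        refine (RB5.adj_cs (Or.inr hredf)).reachable.trans ?_
        exact (RB5.adj_sc (Or.inl hbf)).reachable
      · -- no red edges at all: contradiction with connectivity of the matrix
        exfalso
        push_neg at hact
        have hdisj : ∀ h, h ∈ u ++ [cp] → ∀ e₀, e₀ ∉ u ++ [cp] → (∃ s, M e₀ s) →
            ∀ s, M e₀ s → ¬ M h s := by
          intro h hh e₀ he₀ hMe₀
          refine RB5.dead_disjoint M hmax (u ++ [cp]) hnd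
            (fun u' hlu' hnu' => ihn u' ?_ hnu') h hh (fun s => q2 h hh s)
            (fun s => hact h s) e₀ he₀ hMe₀
          have : (u ++ [cp]).length = u.length + 1 := by simp
          omega
        set V : S ⊕ C → Prop := fun x =>
          Sum.elim (fun s => ∃ e₀, e₀ ∉ u ++ [cp] ∧ (∃ s', M e₀ s') ∧ M e₀ s)
                   (fun c => c ∉ u ++ [cp] ∧ ∃ s', M c s') x with hV
        have hclosed : ∀ x y, V x → (ofMatrix M).toSimple.Adj x y → V y := by
          rintro x y hx (⟨s', c', rfl, rfl, hadj⟩ | ⟨s', c', rfl, rfl, hadj⟩)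
          · -- x = inl s', y = inr c'
            have hMc's' : M c' s' := by
              rcases hadj with hb' | hr'
              · exact hb'
              · exact hr'.elim
            obtain ⟨e₀, he₀, hMe₀, hse₀⟩ := hx
            by_cases hc' : c' ∈ u ++ [cp]
            · exact absurd hMc's' (hdisj c' hc' e₀ he₀ hMe₀ s' hse₀)
            · exact ⟨hc', ⟨s', hMc's'⟩⟩
          · -- x = inr c', y = inl s'
            have hMc's' : M c' s' := by
              rcases hadj with hb' | hr'
              · exact hb'
              · exact hr'.elim
            exact ⟨c', hx.1, hx.2, hMc's'⟩
        have hreach := hconn.preconnected (Sum.inr e) (Sum.inr cp)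
        have hcpV : V (Sum.inr cp) := RB5.reach_closed hclosed hreach ⟨he, hMe⟩
        exact hcpV.1 (by simp)
    exact ⟨hJ, hK⟩

end Aux

/-- every inactive character has a neighbor in the red neighborhood
of each active character. -/
theorem inactive_meets_red_neighborhood {S C : Type} [Fintype C] (M : C → S → Prop)
    (hmax : RBGraph.MaximalM M) (hconn : (RBGraph.ofMatrix M).toSimple.Connected)
    (l : List C) (hl : RBGraph.isReduction M l) (k : ℕ) (hk : k ≤ l.length)
    (Gk : RBGraph S C) (hGk : Gk = RBGraph.partialRed M l k) :
    ∀ c c' : C, Gk.inactive c → (∃ s, Gk.black c s) → Gk.active c' →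
      ∃ s, Gk.black c s ∧ Gk.red c' s := by
  intro c c' _ hblack hact
  have hGk' : Gk = RB5.Gs M (l.take k) := hGk
  subst hGk'
  have hnd : (l.take k).Nodup := (List.take_sublist k l).nodup hl.1
  obtain ⟨p1, p2, -⟩ := RB5.pinv M (l.take k) hnd
  obtain ⟨s₀, hs₀⟩ := hblack
  have hc_not : c ∉ l.take k := fun hmem => p2 c hmem s₀ hs₀
  have hMc : ∃ s, M c s := ⟨s₀, (p1 c hc_not s₀).1.mp hs₀⟩
  obtain ⟨s, hMs, hred⟩ :=
    (RB5.mainJK M hmax hconn (l.take k).length (l.take k) le_rfl hnd).1 c' hact c hc_not hMc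
  exact ⟨s, (p1 c hc_not s).1.mpr hMs, hred⟩
end

section
/- In any partial reduction G_RB^k of a maximal connected graph, every character in C_U has a non-neighbor among the neighbors of each character in C_I. -/
open Classical

/-- Invariant: each character's black edges are either exactly those of `M`, or empty. -/
def BlackInv {S C : Type} (M : C → S → Prop) (G : RBGraph S C) : Prop :=
  ∀ c, (∀ s, G.black c s ↔ M c s) ∨ (∀ s, ¬ G.black c s)

lemma blackInv_pruneStep {S C : Type} {M : C → S → Prop} {G : RBGraph S C}
    (h : BlackInv M G) : BlackInv M (RBGraph.pruneStep G) := by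
  intro c
  by_cases hu : G.redUniversal c
  · exact Or.inr fun s hs => hs.2 hu
  · rcases h c with h' | h'
    · exact Or.inl fun s => by simp [RBGraph.pruneStep, hu, h' s]
    · exact Or.inr fun s hs => h' s hs.1

lemma blackInv_prune {S C : Type} [Fintype C] {M : C → S → Prop} {G : RBGraph S C}
    (h : BlackInv M G) : BlackInv M (RBGraph.prune G) := by
  unfold RBGraph.prune
  induction (Fintype.card C) generalizing G with
  | zero => exact h
  | succ n ih =>
    rw [Function.iterate_succ_apply]
    exact ih (blackInv_pruneStep h)

lemma blackInv_realize {S C : Type} [Fintype C] {M : C → S → Prop} {G : RBGraph S C}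
    (h : BlackInv M G) (c : C) : BlackInv M (RBGraph.realize G c) := by
  apply blackInv_prune
  intro c'
  by_cases hc : c' = c
  · exact Or.inr fun s hs => hs.2 hc
  · rcases h c' with h' | h'
    · exact Or.inl fun s => by simp [hc, h' s]
    · exact Or.inr fun s hs => h' s hs.1

lemma blackInv_realizeSeq {S C : Type} [Fintype C] {M : C → S → Prop} {G : RBGraph S C}
    (h : BlackInv M G) (l : List C) : BlackInv M (RBGraph.realizeSeq G l) := by
  induction l generalizing G with
  | nil => exact h
  | cons a t ih => exact ih (blackInv_realize h a)

lemma blackInv_partialRed {S C : Type} [Fintype C] (M : C → S → Prop) (l : List C) (t : ℕ) :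
    BlackInv M (RBGraph.partialRed M l t) := by
  apply blackInv_realizeSeq
  intro c
  exact Or.inl fun s => Iff.rfl

/-- every character of `C_U` has a non-neighbor among the neighbors
of each character of `C_I`. -/
theorem CU_nonneighbor_in_CI_neighborhood {S C : Type} [Fintype C] (M : C → S → Prop)
    (hmax : RBGraph.MaximalM M) (hconn : (RBGraph.ofMatrix M).toSimple.Connected)
    (l : List C) (hl : RBGraph.isReduction M l) (k : ℕ) (hk : k ≤ l.length)
    (Gk : RBGraph S C) (hGk : Gk = RBGraph.partialRed M l k) :
    ∀ cU ∈ Gk.CU, ∀ cI ∈ Gk.CI, ∃ s, Gk.black cI s ∧ ¬ Gk.black cU s := by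
  intro cU hcU cI hcI
  have hinv : BlackInv M Gk := hGk ▸ blackInv_partialRed M l k
  obtain ⟨-, ⟨sB, -, hB⟩, hUuniv⟩ := hcU
  obtain ⟨-, ⟨s1, hs1, h1⟩, ⟨s0, hs0, h0⟩⟩ := hcI
  -- cI ≠ cU
  have hne : cI ≠ cU := by
    rintro rfl
    exact h0 (hUuniv s0 hs0)
  -- black edges of cI and cU agree with M
  have hIfull : ∀ s, Gk.black cI s ↔ M cI s := by
    rcases hinv cI with h | h
    · exact h
    · exact absurd h1 (h s1)
  have hUfull : ∀ s, Gk.black cU s ↔ M cU s := by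
    rcases hinv cU with h | h
    · exact h
    · exact absurd hB (h sB)
  have := hmax cI cU hne
  push_neg at this
  obtain ⟨s, hI, hU⟩ := this
  exact ⟨s, (hIfull s).2 hI, fun h => hU ((hUfull s).1 h)⟩
end
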